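/- arXiv:1507.06681 — 5 statements merged into one kernel-verified Lean document; each statement's English description precedes it below -/
import Mathlib

section
/- Let a, b be real numbers with 1 < a < b. Then π = ( √((b²−a²)(a²b²−1)) / (a b² √(b⁴−1)) ) · ( (b²+1)·K( b(a²−1)/(a(b²−1)) ) + (b²−1)·K( b(a²+1)/(a(b²+1)) ) ) / F_D^(3)(1/2; 1/2,1/2,1/2; 1 | 1/(1−b⁴), 1/(1−a²b²), a²/(a²−b²) ). -/
open MeasureTheory Real

/-- Complete elliptic integral of the first kind. -/
noncomputable def ellipticK (k : ℝ) : ℝ :=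
  ∫ t in (0:ℝ)..1, 1 / Real.sqrt ((1 - t ^ 2) * (1 - k ^ 2 * t ^ 2))

/-- Complete elliptic integral of the second kind. -/
noncomputable def ellipticE (k : ℝ) : ℝ :=
  ∫ t in (0:ℝ)..1, Real.sqrt (1 - k ^ 2 * t ^ 2) / Real.sqrt (1 - t ^ 2)

/-- Lauricella hypergeometric function `F_D^(3)` (real arguments), via its
Euler integral representation. -/
noncomputable def FD3 (a b₁ b₂ b₃ c x₁ x₂ x₃ : ℝ) : ℝ :=
  Real.Gamma c / (Real.Gamma a * Real.Gamma (c - a)) *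
    ∫ u in (0:ℝ)..1,
      u ^ (a - 1) * (1 - u) ^ (c - a - 1) *
        (1 - x₁ * u) ^ (-b₁) * (1 - x₂ * u) ^ (-b₂) * (1 - x₃ * u) ^ (-b₃)

/-- Appell hypergeometric function `F₁` (real arguments), via its
Euler integral representation. -/
noncomputable def appellF1 (a b₁ b₂ c x y : ℝ) : ℝ :=
  Real.Gamma c / (Real.Gamma a * Real.Gamma (c - a)) *
    ∫ u in (0:ℝ)..1,
      u ^ (a - 1) * (1 - u) ^ (c - a - 1) * (1 - x * u) ^ (-b₁) * (1 - y * u) ^ (-b₂)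

/-- Lauricella hypergeometric function `F_D^(3)` (complex arguments), via its
Euler integral representation with principal branches. -/
noncomputable def FD3C (a b₁ b₂ b₃ c x₁ x₂ x₃ : ℂ) : ℂ :=
  Complex.Gamma c / (Complex.Gamma a * Complex.Gamma (c - a)) *
    ∫ u in (0:ℝ)..1,
      (u : ℂ) ^ (a - 1) * ((1 : ℂ) - (u : ℂ)) ^ (c - a - 1) *
        (1 - x₁ * (u : ℂ)) ^ (-b₁) * (1 - x₂ * (u : ℂ)) ^ (-b₂) *
        (1 - x₃ * (u : ℂ)) ^ (-b₃)

/-- Lauricella hypergeometric function `F_D^(4)` (complex arguments), via its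
Euler integral representation with principal branches. -/
noncomputable def FD4C (a b₁ b₂ b₃ b₄ c x₁ x₂ x₃ x₄ : ℂ) : ℂ :=
  Complex.Gamma c / (Complex.Gamma a * Complex.Gamma (c - a)) *
    ∫ u in (0:ℝ)..1,
      (u : ℂ) ^ (a - 1) * ((1 : ℂ) - (u : ℂ)) ^ (c - a - 1) *
        (1 - x₁ * (u : ℂ)) ^ (-b₁) * (1 - x₂ * (u : ℂ)) ^ (-b₂) *
        (1 - x₃ * (u : ℂ)) ^ (-b₃) * (1 - x₄ * (u : ℂ)) ^ (-b₄)


open Set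

set_option maxHeartbeats 2000000

private noncomputable def QQ (d e v : ℝ) : ℝ := v * (1 - v) * (d ^ 2 - v) * (e - v) * (d ^ 2 / e - v)
private noncomputable def HH (d e v : ℝ) : ℝ := (d - 1) * (d + v) / (2 * Real.sqrt (QQ d e v))
private noncomputable def gg (d v : ℝ) : ℝ := (d - 1) * Real.sqrt v / (d - v)
private noncomputable def gg' (d v : ℝ) : ℝ := (d - 1) * (d + v) / (2 * Real.sqrt v * (d - v) ^ 2)
private noncomputable def phiK (k t : ℝ) : ℝ := 1 / Real.sqrt ((1 - t ^ 2) * (1 - k ^ 2 * t ^ 2))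

private lemma gg_deriv (d : ℝ) {v : ℝ} (hv : 0 < v) (hdv : d - v ≠ 0) :
    HasDerivAt (gg d) (gg' d v) v := by
  have h1 : HasDerivAt (fun x : ℝ => (d - 1) * Real.sqrt x) ((d - 1) * (1 / (2 * Real.sqrt v))) v :=
    (Real.hasDerivAt_sqrt hv.ne').const_mul (d - 1)
  have h2 : HasDerivAt (fun x : ℝ => d - x) (-1 : ℝ) v := by
    simpa using (hasDerivAt_id v).const_sub d
  have h3 : HasDerivAt (fun x : ℝ => (d - 1) * Real.sqrt x / (d - x)) _ v := h1.div h2 hdv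
  have hgg : gg d = fun x : ℝ => (d - 1) * Real.sqrt x / (d - x) := rfl
  rw [hgg]
  convert h3 using 1
  unfold gg'
  set s := Real.sqrt v with hs
  have hv2 : s ^ 2 = v := Real.sq_sqrt hv.le
  have hs0 : s ≠ 0 := (Real.sqrt_pos.2 hv).ne'
  rw [← hv2] at hdv ⊢
  field_simp
  ring

private lemma gg_ne (d : ℝ) (hdc : 1 < d ∨ d < -1) {v : ℝ} (h0 : 0 ≤ v) (h1 : v ≤ 1) :
    d - v ≠ 0 := by
  rcases hdc with h | h
  · exact ne_of_gt (by linarith)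
  · exact ne_of_lt (by linarith)

private lemma gg_image (d : ℝ) (hdc : 1 < d ∨ d < -1) : gg d '' Ioo 0 1 = Ioo 0 1 := by
  apply Subset.antisymm
  · rintro t ⟨v, ⟨hv0, hv1⟩, rfl⟩
    have hs0 : 0 < Real.sqrt v := Real.sqrt_pos.2 hv0
    have hs1 : Real.sqrt v < 1 := by
      rw [show (1:ℝ) = Real.sqrt 1 by simp]
      exact Real.sqrt_lt_sqrt hv0.le (by simpa using hv1)
    have hgg : gg d v = (d - 1) * Real.sqrt v / (d - v) := rfl
    set s := Real.sqrt v with hs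
    have hv2 : s ^ 2 = v := Real.sq_sqrt hv0.le
    rw [hgg, ← hv2]
    constructor
    · rcases hdc with h | h
      · apply div_pos (by nlinarith) (by nlinarith)
      · apply div_pos_of_neg_of_neg (by nlinarith) (by nlinarith)
    · rcases hdc with h | h
      · rw [div_lt_one (by nlinarith)]; nlinarith
      · rw [div_lt_one_iff]
        right; right
        constructor <;> nlinarith
  · have hcont : ContinuousOn (gg d) (Icc 0 1) := by
      apply ContinuousOn.div
      · exact (continuous_const.mul Real.continuous_sqrt).continuousOn
      · exact (continuous_const.sub continuous_id).continuousOn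
      · intro v hv; exact gg_ne d hdc hv.1 hv.2
    have h0 : gg d 0 = 0 := by unfold gg; simp
    have h1 : gg d 1 = 1 := by
      have hd1 : d - 1 ≠ 0 := gg_ne d hdc zero_le_one le_rfl
      unfold gg; rw [Real.sqrt_one, mul_one, div_self hd1]
    have := intermediate_value_Ioo zero_le_one hcont
    rw [h0, h1] at this
    exact this

private lemma gg_pos_deriv (d : ℝ) (hdc : 1 < d ∨ d < -1) {v : ℝ} (h0 : 0 < v) (h1 : v < 1) :
    0 < gg' d v := by
  have hdv : d - v ≠ 0 := gg_ne d hdc h0.le h1.le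
  have hnum : 0 < (d - 1) * (d + v) := by rcases hdc with h | h <;> nlinarith
  have hden : 0 < 2 * Real.sqrt v * (d - v) ^ 2 := by
    have := Real.sqrt_pos.2 h0
    have h2 : 0 < (d - v) ^ 2 := pow_two_pos_of_ne_zero hdv
    positivity
  exact div_pos hnum hden

private lemma gg_mono (d : ℝ) (hdc : 1 < d ∨ d < -1) : StrictMonoOn (gg d) (Ioo 0 1) := by
  apply strictMonoOn_of_deriv_pos (convex_Ioo 0 1)
  · apply ContinuousOn.div
    · exact (continuous_const.mul Real.continuous_sqrt).continuousOn
    · exact (continuous_const.sub continuous_id).continuousOn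
    · intro v hv; exact gg_ne d hdc hv.1.le hv.2.le
  · intro x hx
    rw [interior_Ioo] at hx
    rw [(gg_deriv d hx.1 (gg_ne d hdc hx.1.le hx.2.le)).deriv]
    exact gg_pos_deriv d hdc hx.1 hx.2

private lemma rp_neg_half {x : ℝ} (hx : 0 ≤ x) : x ^ (-(1/2) : ℝ) = 1 / Real.sqrt x := by
  rw [Real.rpow_neg hx, Real.sqrt_eq_rpow]
  norm_num

private lemma phiK_integrable {k : ℝ} (hk : k ^ 2 < 1) :
    IntegrableOn (phiK k) (Ioo (0:ℝ) 1) := by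
  have hk0 : (0:ℝ) < 1 - k ^ 2 := by linarith
  have hint : IntegrableOn (fun t : ℝ => (1 / Real.sqrt (1 - k ^ 2)) * (1 - t) ^ (-(1/2) : ℝ))
      (Ioo (0:ℝ) 1) := by
    have h1 : IntervalIntegrable (fun x : ℝ => x ^ (-(1/2):ℝ)) volume 0 1 :=
      intervalIntegral.intervalIntegrable_rpow' (by norm_num)
    have h2 : IntervalIntegrable (fun x : ℝ => (1 - x) ^ (-(1/2):ℝ)) volume 0 1 := by
      have h := (h1.comp_sub_left 1).symm
      rwa [show (1:ℝ)-0 = 1 by norm_num, show (1:ℝ)-1 = 0 by norm_num] at h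
    have h3 := h2.const_mul (1 / Real.sqrt (1 - k ^ 2))
    exact (intervalIntegrable_iff_integrableOn_Ioo_of_le (by norm_num : (0:ℝ) ≤ 1)).mp h3
  apply hint.mono'
  · apply Measurable.aestronglyMeasurable
    unfold phiK
    fun_prop
  · rw [ae_restrict_iff' measurableSet_Ioo]
    filter_upwards with t ht
    obtain ⟨ht0, ht1⟩ := ht
    have hb1 : (0:ℝ) < 1 - t := by linarith
    have e1 : 1 - t ≤ 1 - t ^ 2 := by nlinarith
    have e2 : 1 - k ^ 2 ≤ 1 - k ^ 2 * t ^ 2 := by nlinarith [sq_nonneg k]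
    have hA : (1 - k ^ 2) * (1 - t) ≤ (1 - t ^ 2) * (1 - k ^ 2 * t ^ 2) := by
      have := mul_le_mul e2 e1 hb1.le (by nlinarith [sq_nonneg (k*t)])
      nlinarith [this]
    have hApos : (0:ℝ) < (1 - k ^ 2) * (1 - t) := mul_pos hk0 hb1
    have hmono : Real.sqrt ((1 - k ^ 2) * (1 - t)) ≤ Real.sqrt ((1 - t ^ 2) * (1 - k ^ 2 * t ^ 2)) :=
      Real.sqrt_le_sqrt hA
    have hnorm : ‖phiK k t‖ = 1 / Real.sqrt ((1 - t ^ 2) * (1 - k ^ 2 * t ^ 2)) := by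
      unfold phiK
      rw [Real.norm_eq_abs, abs_of_nonneg]; positivity
    rw [hnorm, rp_neg_half hb1.le, div_mul_div_comm, one_mul, ← Real.sqrt_mul hk0.le]
    exact one_div_le_one_div_of_le (Real.sqrt_pos.2 hApos) hmono

private lemma key (d e k : ℝ) (hdc : 1 < d ∨ d < -1) (he1 : 1 < e) (he2 : e < d ^ 2)
    (hk : k ^ 2 * (e * (d - 1) ^ 2) = (e - d) ^ 2) :
    IntegrableOn (HH d e) (Ioo (0:ℝ) 1) ∧
      ellipticK k = ∫ v in Ioo (0:ℝ) 1, HH d e v := by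
  have he0 : (0:ℝ) < e := by linarith
  have hdsq : (0:ℝ) < (d - 1) ^ 2 := by rcases hdc with h | h <;> nlinarith
  have hk2 : k ^ 2 < 1 := by
    nlinarith [mul_pos (sub_pos.2 he1) (sub_pos.2 he2), mul_pos he0 hdsq]
  have hid : ∀ v : ℝ, (d - v) ^ 2 - k ^ 2 * (d - 1) ^ 2 * v = (e - v) * (d ^ 2 / e - v) := by
    intro v
    have he0' : e ≠ 0 := he0.ne'
    field_simp
    linear_combination (-v) * hk
  have hderiv : ∀ v ∈ Ioo (0:ℝ) 1, HasDerivWithinAt (gg d) (gg' d v) (Ioo (0:ℝ) 1) v :=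
    fun v hv => (gg_deriv d hv.1 (gg_ne d hdc hv.1.le hv.2.le)).hasDerivWithinAt
  have hinj := (gg_mono d hdc).injOn
  have himg := gg_image d hdc
  have hpt : EqOn (fun v => |gg' d v| • phiK k (gg d v)) (HH d e) (Ioo (0:ℝ) 1) := by
    intro v hv
    obtain ⟨hv0, hv1⟩ := hv
    have hsv : 0 < Real.sqrt v := Real.sqrt_pos.2 hv0
    have hdv : d - v ≠ 0 := gg_ne d hdc hv0.le hv1.le
    have hdv2 : (0:ℝ) < (d - v) ^ 2 := pow_two_pos_of_ne_zero hdv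
    have hnum : 0 < (d - 1) * (d + v) := by rcases hdc with h | h <;> nlinarith
    have habs : |gg' d v| = gg' d v := abs_of_pos (gg_pos_deriv d hdc hv0 hv1)
    have hp1 : (0:ℝ) < 1 - v := by linarith
    have hp2 : (0:ℝ) < d ^ 2 - v := by nlinarith [hdsq]
    have hp3 : (0:ℝ) < e - v := by linarith
    have hp4 : (0:ℝ) < d ^ 2 / e - v := by
      have : (1:ℝ) < d ^ 2 / e := (one_lt_div he0).2 he2
      linarith
    have h1 : 1 - (gg d v) ^ 2 = (1 - v) * (d ^ 2 - v) / (d - v) ^ 2 := by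
      unfold gg
      rw [div_pow, mul_pow, Real.sq_sqrt hv0.le]
      field_simp
      ring
    have h2 : 1 - k ^ 2 * (gg d v) ^ 2 = (e - v) * (d ^ 2 / e - v) / (d - v) ^ 2 := by
      rw [← hid v]
      unfold gg
      rw [div_pow, mul_pow, Real.sq_sqrt hv0.le]
      field_simp
    have hN : (0:ℝ) < (1 - v) * (d ^ 2 - v) * ((e - v) * (d ^ 2 / e - v)) :=
      mul_pos (mul_pos hp1 hp2) (mul_pos hp3 hp4)
    have hphi : phiK k (gg d v)
        = (d - v) ^ 2 / Real.sqrt ((1 - v) * (d ^ 2 - v) * ((e - v) * (d ^ 2 / e - v))) := by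
      unfold phiK
      rw [h1, h2, div_mul_div_comm, Real.sqrt_div hN.le,
        Real.sqrt_mul_self (sq_nonneg (d - v)), one_div_div]
    have hQ : Real.sqrt (QQ d e v)
        = Real.sqrt v * Real.sqrt ((1 - v) * (d ^ 2 - v) * ((e - v) * (d ^ 2 / e - v))) := by
      rw [← Real.sqrt_mul hv0.le]
      congr 1
      unfold QQ
      ring
    have hNs : Real.sqrt ((1 - v) * (d ^ 2 - v) * ((e - v) * (d ^ 2 / e - v))) ≠ 0 :=
      (Real.sqrt_pos.2 hN).ne'
    show |gg' d v| • phiK k (gg d v) = HH d e v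
    rw [smul_eq_mul, habs]
    unfold HH gg'
    rw [hphi, hQ]
    rw [div_mul_div_comm, div_eq_div_iff (by positivity) (by positivity)]
    ring
  constructor
  · have hInt : IntegrableOn (phiK k) (gg d '' Ioo (0:ℝ) 1) := by
      rw [himg]; exact phiK_integrable hk2
    have := (integrableOn_image_iff_integrableOn_abs_deriv_smul measurableSet_Ioo hderiv hinj
      (phiK k)).1 hInt
    exact this.congr_fun hpt measurableSet_Ioo
  · calc ellipticK k = ∫ t in Ioo (0:ℝ) 1, phiK k t := by
          unfold ellipticK phiK
          rw [intervalIntegral.integral_of_le zero_le_one, integral_Ioc_eq_integral_Ioo]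
      _ = ∫ v in Ioo (0:ℝ) 1, |gg' d v| • phiK k (gg d v) := by
          rw [← integral_image_eq_integral_abs_deriv_smul measurableSet_Ioo hderiv hinj (phiK k),
            himg]
      _ = ∫ v in Ioo (0:ℝ) 1, HH d e v := setIntegral_congr_fun measurableSet_Ioo hpt

theorem stmt_13 (a b : ℝ) (ha : 1 < a) (hab : a < b) :
    π = (Real.sqrt ((b^2 - a^2) * (a^2*b^2 - 1)) / (a * b^2 * Real.sqrt (b^4 - 1))) *
          ((b^2 + 1) * ellipticK (b * (a^2 - 1) / (a * (b^2 - 1))) +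
            (b^2 - 1) * ellipticK (b * (a^2 + 1) / (a * (b^2 + 1)))) /
        FD3 (1/2) (1/2) (1/2) (1/2) 1
          (1/(1 - b^4)) (1/(1 - a^2*b^2)) (a^2/(a^2 - b^2)) := by
  have ha0 : 0 < a := by linarith
  have hb1 : 1 < b := lt_trans ha hab
  have hb0 : 0 < b := by linarith
  have ha2 : 1 < a ^ 2 := by nlinarith
  have hb2 : 1 < b ^ 2 := by nlinarith
  have hab2 : a ^ 2 < b ^ 2 := by nlinarith
  have hb4 : 1 < b ^ 4 := by nlinarith
  have he1 : 1 < a ^ 2 * b ^ 2 := by nlinarith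
  have he2 : a ^ 2 * b ^ 2 < (b ^ 2) ^ 2 := by nlinarith
  have hb21 : b ^ 2 - 1 ≠ 0 := by nlinarith
  have hb21' : (0:ℝ) < b ^ 2 + 1 := by nlinarith
  -- instantiate the reduction lemma twice
  obtain ⟨hI1, hK1⟩ := key (b ^ 2) (a ^ 2 * b ^ 2) (b * (a ^ 2 - 1) / (a * (b ^ 2 - 1)))
    (Or.inl hb2) he1 he2 (by field_simp)
  obtain ⟨hI2, hK2⟩ := key (-(b ^ 2)) (a ^ 2 * b ^ 2) (b * (a ^ 2 + 1) / (a * (b ^ 2 + 1)))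
    (Or.inr (by nlinarith)) he1 (by nlinarith) (by field_simp; ring)
  -- rewrite the second integrand in terms of `QQ (b^2)`
  have hQQeq : ∀ v : ℝ, QQ (-(b ^ 2)) (a ^ 2 * b ^ 2) v = QQ (b ^ 2) (a ^ 2 * b ^ 2) v := by
    intro v; unfold QQ; ring_nf
  have hH2eq : EqOn (HH (-(b ^ 2)) (a ^ 2 * b ^ 2))
      (fun v => (b ^ 2 + 1) * (b ^ 2 - v) / (2 * Real.sqrt (QQ (b ^ 2) (a ^ 2 * b ^ 2) v)))
      (Ioo (0:ℝ) 1) := by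
    intro v _
    unfold HH
    rw [hQQeq v, show (-(b ^ 2) - 1) * (-(b ^ 2) + v) = (b ^ 2 + 1) * (b ^ 2 - v) from by ring]
  have hI2' : IntegrableOn
      (fun v => (b ^ 2 + 1) * (b ^ 2 - v) / (2 * Real.sqrt (QQ (b ^ 2) (a ^ 2 * b ^ 2) v)))
      (Ioo (0:ℝ) 1) := hI2.congr_fun hH2eq measurableSet_Ioo
  have hK2' : ellipticK (b * (a ^ 2 + 1) / (a * (b ^ 2 + 1)))
      = ∫ v in Ioo (0:ℝ) 1, (b ^ 2 + 1) * (b ^ 2 - v) /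
          (2 * Real.sqrt (QQ (b ^ 2) (a ^ 2 * b ^ 2) v)) := by
    rw [hK2]; exact setIntegral_congr_fun measurableSet_Ioo hH2eq
  -- positivity of QQ on (0,1)
  have hQpos : ∀ v ∈ Ioo (0:ℝ) 1, 0 < QQ (b ^ 2) (a ^ 2 * b ^ 2) v := by
    rintro v ⟨hv0, hv1⟩
    unfold QQ
    have h1 : (0:ℝ) < (b ^ 2) ^ 2 - v := by nlinarith
    have h2 : (0:ℝ) < a ^ 2 * b ^ 2 - v := by nlinarith
    have h3 : (0:ℝ) < (b ^ 2) ^ 2 / (a ^ 2 * b ^ 2) - v := by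
      have : (1:ℝ) < (b ^ 2) ^ 2 / (a ^ 2 * b ^ 2) := (one_lt_div (by positivity)).2 he2
      linarith
    have h4 : (0:ℝ) < 1 - v := by linarith
    positivity
  -- decompose 1/sqrt(QQ) as a combination of the two integrands
  have hpt : EqOn (fun v : ℝ => 1 / Real.sqrt (QQ (b ^ 2) (a ^ 2 * b ^ 2) v))
      (fun v => (1 / (b ^ 2 * (b ^ 4 - 1))) *
        ((b ^ 2 + 1) * HH (b ^ 2) (a ^ 2 * b ^ 2) v +
          (b ^ 2 - 1) * ((b ^ 2 + 1) * (b ^ 2 - v) / (2 * Real.sqrt (QQ (b ^ 2) (a ^ 2 * b ^ 2) v)))))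
      (Ioo (0:ℝ) 1) := by
    intro v hv
    have hs : Real.sqrt (QQ (b ^ 2) (a ^ 2 * b ^ 2) v) ≠ 0 := (Real.sqrt_pos.2 (hQpos v hv)).ne'
    show (1:ℝ) / Real.sqrt (QQ (b ^ 2) (a ^ 2 * b ^ 2) v) = _
    unfold HH
    beta_reduce
    generalize Real.sqrt (QQ (b ^ 2) (a ^ 2 * b ^ 2) v) = s at hs ⊢
    have hB4 : b ^ 4 - 1 ≠ 0 := by nlinarith
    have hBden : (b ^ 2 * (b ^ 4 - 1)) ≠ 0 := ne_of_gt (by nlinarith)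
    field_simp
    ring
  have hIF_int : IntegrableOn (fun v : ℝ => 1 / Real.sqrt (QQ (b ^ 2) (a ^ 2 * b ^ 2) v))
      (Ioo (0:ℝ) 1) := by
    apply IntegrableOn.congr_fun _ hpt.symm measurableSet_Ioo
    exact ((hI1.const_mul _).add (hI2'.const_mul _)).const_mul _
  have hIF_eq : ∫ v in Ioo (0:ℝ) 1, 1 / Real.sqrt (QQ (b ^ 2) (a ^ 2 * b ^ 2) v)
      = (1 / (b ^ 2 * (b ^ 4 - 1))) *
          ((b ^ 2 + 1) * ellipticK (b * (a ^ 2 - 1) / (a * (b ^ 2 - 1))) +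
            (b ^ 2 - 1) * ellipticK (b * (a ^ 2 + 1) / (a * (b ^ 2 + 1)))) := by
    rw [setIntegral_congr_fun measurableSet_Ioo hpt, integral_const_mul,
      integral_add (hI1.const_mul _) (hI2'.const_mul _), integral_const_mul, integral_const_mul,
      ← hK1, ← hK2']
  -- positivity of the central integral
  have hIF_pos : 0 < ∫ v in Ioo (0:ℝ) 1, 1 / Real.sqrt (QQ (b ^ 2) (a ^ 2 * b ^ 2) v) := by
    rw [setIntegral_pos_iff_support_of_nonneg_ae
      (Filter.Eventually.of_forall (fun v => by positivity)) hIF_int]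
    have hsub : Ioo (0:ℝ) 1 ⊆
        Function.support (fun v : ℝ => 1 / Real.sqrt (QQ (b ^ 2) (a ^ 2 * b ^ 2) v)) ∩ Ioo 0 1 := by
      intro v hv
      refine ⟨?_, hv⟩
      have := hQpos v hv
      simp only [Function.mem_support]
      positivity
    calc (0:ENNReal) < volume (Ioo (0:ℝ) 1) := by rw [Real.volume_Ioo]; norm_num
      _ ≤ _ := measure_mono hsub
  -- interval integral to set integral helper
  have hIoo : ∀ f : ℝ → ℝ, (∫ x in (0:ℝ)..1, f x) = ∫ x in Ioo (0:ℝ) 1, f x := fun f => by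
    rw [intervalIntegral.integral_of_le zero_le_one, integral_Ioc_eq_integral_Ioo]
  -- the FD3 value
  have hx1 : (1:ℝ) - b ^ 4 ≠ 0 := ne_of_lt (by nlinarith)
  have hx2 : (1:ℝ) - a ^ 2 * b ^ 2 ≠ 0 := ne_of_lt (by nlinarith)
  have hx3 : a ^ 2 - b ^ 2 ≠ 0 := ne_of_lt (by nlinarith)
  have hDpos : (0:ℝ) < (b ^ 4 - 1) * (a ^ 2 * b ^ 2 - 1) * (b ^ 2 - a ^ 2) := by
    apply mul_pos (mul_pos (by nlinarith) (by nlinarith)) (by nlinarith)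
  have hpoint : EqOn
      (fun u : ℝ => u ^ ((1:ℝ)/2 - 1) * (1 - u) ^ ((1:ℝ)/2 - 1) *
        (1 - 1/(1 - b ^ 4) * u) ^ (-(1/2:ℝ)) * (1 - 1/(1 - a ^ 2 * b ^ 2) * u) ^ (-(1/2:ℝ)) *
        (1 - a ^ 2/(a ^ 2 - b ^ 2) * u) ^ (-(1/2:ℝ)))
      (fun u : ℝ => Real.sqrt ((b ^ 4 - 1) * (a ^ 2 * b ^ 2 - 1) * (b ^ 2 - a ^ 2)) / a *
        (1 / Real.sqrt (QQ (b ^ 2) (a ^ 2 * b ^ 2) (1 - u))))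
      (Ioo (0:ℝ) 1) := by
    rintro u ⟨hu0, hu1⟩
    have h1u : (0:ℝ) < 1 - u := by linarith
    have hf1 : (0:ℝ) < 1 - 1/(1 - b ^ 4) * u := by
      have h : 1/(1 - b ^ 4) < 0 := div_neg_of_pos_of_neg one_pos (by nlinarith)
      nlinarith
    have hf2 : (0:ℝ) < 1 - 1/(1 - a ^ 2 * b ^ 2) * u := by
      have h : 1/(1 - a ^ 2 * b ^ 2) < 0 := div_neg_of_pos_of_neg one_pos (by nlinarith)
      nlinarith
    have hf3 : (0:ℝ) < 1 - a ^ 2/(a ^ 2 - b ^ 2) * u := by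
      have h : a ^ 2/(a ^ 2 - b ^ 2) < 0 := div_neg_of_pos_of_neg (by positivity) (by nlinarith)
      nlinarith
    have hQp : 0 < QQ (b ^ 2) (a ^ 2 * b ^ 2) (1 - u) := hQpos (1 - u) ⟨by linarith, by linarith⟩
    show _ = _
    simp only []
    rw [show ((1:ℝ)/2 - 1) = -(1/2:ℝ) by norm_num]
    rw [rp_neg_half hu0.le, rp_neg_half h1u.le, rp_neg_half hf1.le, rp_neg_half hf2.le,
      rp_neg_half hf3.le]
    rw [div_mul_div_comm, div_mul_div_comm, div_mul_div_comm, div_mul_div_comm]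
    simp only [one_mul]
    rw [← Real.sqrt_mul hu0.le, ← Real.sqrt_mul (by positivity), ← Real.sqrt_mul (by positivity),
      ← Real.sqrt_mul (by positivity)]
    have harg : u * (1 - u) * (1 - 1/(1 - b ^ 4) * u) * (1 - 1/(1 - a ^ 2 * b ^ 2) * u) *
        (1 - a ^ 2/(a ^ 2 - b ^ 2) * u)
        = QQ (b ^ 2) (a ^ 2 * b ^ 2) (1 - u) *
          (a ^ 2 / ((b ^ 4 - 1) * (a ^ 2 * b ^ 2 - 1) * (b ^ 2 - a ^ 2))) := by
      unfold QQ
      rw [show b ^ 4 = (b ^ 2) ^ 2 by ring]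
      have gen : ∀ c B e u : ℝ, e = c * B → 1 - B ^ 2 ≠ 0 → 1 - e ≠ 0 → c - B ≠ 0 → e ≠ 0 →
          B ^ 2 - 1 ≠ 0 → e - 1 ≠ 0 → B - c ≠ 0 →
          u * (1 - u) * (1 - 1/(1 - B ^ 2) * u) * (1 - 1/(1 - e) * u) * (1 - c/(c - B) * u)
            = (1 - u) * (1 - (1 - u)) * (B ^ 2 - (1 - u)) * (e - (1 - u)) * (B ^ 2 / e - (1 - u)) *
              (c / ((B ^ 2 - 1) * (e - 1) * (B - c))) := by
        intro c B e u he h1 h2 h3 h4 h5 h6 h7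
        field_simp
        subst he
        ring
      exact gen (a ^ 2) (b ^ 2) (a ^ 2 * b ^ 2) u rfl (by nlinarith : 1 - (b ^ 2) ^ 2 < 0).ne
        (by nlinarith : 1 - a ^ 2 * b ^ 2 < 0).ne (by nlinarith : a ^ 2 - b ^ 2 < 0).ne
        (by positivity : 0 < a ^ 2 * b ^ 2).ne' (by nlinarith : 0 < (b ^ 2) ^ 2 - 1).ne'
        (by nlinarith : 0 < a ^ 2 * b ^ 2 - 1).ne' (by nlinarith : 0 < b ^ 2 - a ^ 2).ne'
    rw [harg, Real.sqrt_mul hQp.le, Real.sqrt_div (sq_nonneg a), Real.sqrt_sq ha0.le]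
    have hsQ : Real.sqrt (QQ (b ^ 2) (a ^ 2 * b ^ 2) (1 - u)) ≠ 0 := (Real.sqrt_pos.2 hQp).ne'
    have hsD : Real.sqrt ((b ^ 4 - 1) * (a ^ 2 * b ^ 2 - 1) * (b ^ 2 - a ^ 2)) ≠ 0 :=
      (Real.sqrt_pos.2 hDpos).ne'
    field_simp
  have hFD3 : FD3 (1/2) (1/2) (1/2) (1/2) 1
      (1/(1 - b^4)) (1/(1 - a^2*b^2)) (a^2/(a^2 - b^2))
      = (1/π) * (Real.sqrt ((b ^ 4 - 1) * (a ^ 2 * b ^ 2 - 1) * (b ^ 2 - a ^ 2)) / a *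
          ∫ v in Ioo (0:ℝ) 1, 1 / Real.sqrt (QQ (b ^ 2) (a ^ 2 * b ^ 2) v)) := by
    unfold FD3
    rw [show (1:ℝ) - 1/2 = 1/2 by norm_num, Real.Gamma_one, Real.Gamma_one_half_eq]
    rw [show Real.sqrt π * Real.sqrt π = π from Real.mul_self_sqrt Real.pi_nonneg]
    congr 1
    rw [hIoo, setIntegral_congr_fun measurableSet_Ioo hpoint, ← hIoo]
    rw [intervalIntegral.integral_const_mul]
    congr 1
    have h := intervalIntegral.integral_comp_sub_left
      (fun v => 1 / Real.sqrt (QQ (b ^ 2) (a ^ 2 * b ^ 2) v)) 1 (a := 0) (b := 1)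
    rw [show (1:ℝ) - 1 = 0 by norm_num, show (1:ℝ) - 0 = 1 by norm_num] at h
    rw [h, hIoo]
  -- final algebra
  have hS_eq : (b ^ 2 + 1) * ellipticK (b * (a ^ 2 - 1) / (a * (b ^ 2 - 1))) +
      (b ^ 2 - 1) * ellipticK (b * (a ^ 2 + 1) / (a * (b ^ 2 + 1)))
      = b ^ 2 * (b ^ 4 - 1) * ∫ v in Ioo (0:ℝ) 1, 1 / Real.sqrt (QQ (b ^ 2) (a ^ 2 * b ^ 2) v) := by
    rw [hIF_eq]
    have : b ^ 2 * (b ^ 4 - 1) ≠ 0 := ne_of_gt (by nlinarith)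
    have hB4 : b ^ 4 - 1 ≠ 0 := by nlinarith
    field_simp
  have hsD : Real.sqrt ((b ^ 4 - 1) * (a ^ 2 * b ^ 2 - 1) * (b ^ 2 - a ^ 2))
      = Real.sqrt ((b ^ 2 - a ^ 2) * (a ^ 2 * b ^ 2 - 1)) * Real.sqrt (b ^ 4 - 1) := by
    rw [← Real.sqrt_mul (by nlinarith : (0:ℝ) ≤ (b ^ 2 - a ^ 2) * (a ^ 2 * b ^ 2 - 1))]
    congr 1
    ring
  rw [hFD3, hS_eq, hsD]
  have hMpos : (0:ℝ) < (b ^ 2 - a ^ 2) * (a ^ 2 * b ^ 2 - 1) := mul_pos (by nlinarith) (by nlinarith)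
  have hBpos : (0:ℝ) < b ^ 4 - 1 := by nlinarith
  have hsMne : Real.sqrt ((b ^ 2 - a ^ 2) * (a ^ 2 * b ^ 2 - 1)) ≠ 0 := (Real.sqrt_pos.2 hMpos).ne'
  have hsBne : Real.sqrt (b ^ 4 - 1) ≠ 0 := (Real.sqrt_pos.2 hBpos).ne'
  have hIFne : (∫ v in Ioo (0:ℝ) 1, 1 / Real.sqrt (QQ (b ^ 2) (a ^ 2 * b ^ 2) v)) ≠ 0 := hIF_pos.ne'
  have hB2 : Real.sqrt (b ^ 4 - 1) * Real.sqrt (b ^ 4 - 1) = b ^ 4 - 1 :=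
    Real.mul_self_sqrt hBpos.le
  have hpi : π ≠ 0 := Real.pi_ne_zero
  have hsMne' : Real.sqrt ((b ^ 2 - a ^ 2) * (b ^ 2 * a ^ 2 - 1)) ≠ 0 := by
    rw [mul_comm (b ^ 2) (a ^ 2)]; exact hsMne
  have hIFne' : (∫ v in Ioo (0:ℝ) 1, 1 / Real.sqrt (QQ (b ^ 2) (b ^ 2 * a ^ 2) v)) ≠ 0 := by
    rw [mul_comm (b ^ 2) (a ^ 2)]; exact hIFne
  field_simp
  linear_combination hB2
end

section
/- Let a, b be real numbers with 1 < a < b. Then π = (8/3)·b⁴·(𝕂 + 𝔼)/𝔽, where 𝕂 = ((b⁴−b²+1)/(b²−1))·K( (a²−1)b/(a(b²−1)) ) − ((b⁴+b²+1)/(1+b²))·K( (a²+1)b/(a(1+b²)) ), 𝔼 = (1−b²)·E( (a²−1)b/(a(b²−1)) ) + (1+b²)·E( (a²+1)b/(a(1+b²)) ), and 𝔽 = F_D^(3)(5/2; 1/2,1/2,1/2; 3 | a²/b², 1/(a²b²), 1/b⁴). -/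
open MeasureTheory Real

open Set

noncomputable def fK (k τ : ℝ) : ℝ := 1 / Real.sqrt ((1 - τ ^ 2) * (1 - k ^ 2 * τ ^ 2))
noncomputable def fE (k τ : ℝ) : ℝ := Real.sqrt (1 - k ^ 2 * τ ^ 2) / Real.sqrt (1 - τ ^ 2)

noncomputable def fJ (a b u : ℝ) : ℝ :=
  u ^ ((3:ℝ)/2) * (1 - u) ^ (-(1/2) : ℝ) * (1 - a^2/b^2 * u) ^ (-(1/2) : ℝ) *
    (1 - 1/(a^2*b^2) * u) ^ (-(1/2) : ℝ) * (1 - 1/b^4 * u) ^ (-(1/2) : ℝ)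

lemma rpow_neg_half_eq (x : ℝ) (hx : 0 ≤ x) : x ^ (-(1/2) : ℝ) = (Real.sqrt x)⁻¹ := by
  rw [Real.sqrt_eq_rpow, ← Real.rpow_neg hx]

noncomputable def tau1 (b t : ℝ) : ℝ := (b^2-1)*t/(b^2-t^2)
noncomputable def tau2 (b t : ℝ) : ℝ := (1+b^2)*t/(b^2+t^2)
noncomputable def Pf (a b t : ℝ) : ℝ := (1-t^2)*(1-a^2*t^2/b^2)*(1-t^2/(a^2*b^2))*(1-t^2/b^4)
noncomputable def dPf (a b t : ℝ) : ℝ :=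
  (-(2*t))*(1-a^2*t^2/b^2)*(1-t^2/(a^2*b^2))*(1-t^2/b^4)
  + (1-t^2)*(-(2*a^2*t/b^2))*(1-t^2/(a^2*b^2))*(1-t^2/b^4)
  + (1-t^2)*(1-a^2*t^2/b^2)*(-(2*t/(a^2*b^2)))*(1-t^2/b^4)
  + (1-t^2)*(1-a^2*t^2/b^2)*(1-t^2/(a^2*b^2))*(-(2*t/b^4))
noncomputable def Cf (a b t : ℝ) : ℝ := t * Real.sqrt (Pf a b t) / (b^4-t^4)
noncomputable def k1 (a b : ℝ) : ℝ := (a^2-1)*b/(a*(b^2-1))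
noncomputable def k2 (a b : ℝ) : ℝ := (a^2+1)*b/(a*(1+b^2))

section vals
variable {a b t : ℝ} (ha : 1 < a) (hab : a < b) (ht0 : 0 ≤ t) (ht1 : t < 1)

include ha hab ht0 ht1

omit ha hab in lemma ht2' : t^2 < 1 := by nlinarith
omit ha hab in lemma w1_pos : 0 < 1 - t^2 := by nlinarith
lemma w2_pos : 0 < 1 - a^2*t^2/b^2 := by
  have hb0 : (0:ℝ) < b := by linarith
  have h2 := ht2' ht0 ht1
  rw [sub_pos, div_lt_one (by positivity)]
  nlinarith [mul_pos (by positivity : (0:ℝ) < a^2) (sub_pos.mpr h2)]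
lemma w3_pos : 0 < 1 - t^2/(a^2*b^2) := by
  have ha0 : (0:ℝ) < a := by linarith
  have hb0 : (0:ℝ) < b := by linarith
  have h2 := ht2' ht0 ht1
  have ha2 : (1:ℝ) < a^2 := by nlinarith
  have hb2 : (1:ℝ) < b^2 := by nlinarith
  have : (1:ℝ) < a^2*b^2 := by nlinarith
  rw [sub_pos, div_lt_one (by positivity)]
  linarith
lemma w4_pos : 0 < 1 - t^2/b^4 := by
  have hb0 : (0:ℝ) < b := by linarith
  have h2 := ht2' ht0 ht1
  have hb2 : (1:ℝ) < b^2 := by nlinarith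
  have : (1:ℝ) < b^4 := by nlinarith
  rw [sub_pos, div_lt_one (by positivity)]
  linarith

lemma Pf_pos : 0 < Pf a b t :=
  mul_pos (mul_pos (mul_pos (w1_pos ht0 ht1) (w2_pos ha hab ht0 ht1))
    (w3_pos ha hab ht0 ht1)) (w4_pos ha hab ht0 ht1)

lemma den1_pos : 0 < b^2 - t^2 := by nlinarith
lemma den2_pos : 0 < b^2 + t^2 := by nlinarith

lemma one_sub_tau1_sq : 1 - (tau1 b t)^2 =
    ((1-t^2)*(1-t^2/b^4)) * (b^4/(b^2-t^2)^2) := by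
  have h := den1_pos ha hab ht0 ht1
  have hb0 : (0:ℝ) < b := by linarith
  rw [tau1]
  field_simp
  ring

lemma one_sub_k1_tau1_sq : 1 - (k1 a b)^2 * (tau1 b t)^2 =
    ((1-a^2*t^2/b^2)*(1-t^2/(a^2*b^2))) * (b^4/(b^2-t^2)^2) := by
  have h := den1_pos ha hab ht0 ht1
  have ha0 : (0:ℝ) < a := by linarith
  have hb0 : (0:ℝ) < b := by linarith
  have hb1 : (0:ℝ) < b^2 - 1 := by nlinarith
  rw [tau1, k1]
  field_simp
  ring

lemma one_sub_tau2_sq : 1 - (tau2 b t)^2 =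
    ((1-t^2)*(1-t^2/b^4)) * (b^4/(b^2+t^2)^2) := by
  have h := den2_pos ha hab ht0 ht1
  have hb0 : (0:ℝ) < b := by linarith
  rw [tau2]
  field_simp
  ring

lemma one_sub_k2_tau2_sq : 1 - (k2 a b)^2 * (tau2 b t)^2 =
    ((1-a^2*t^2/b^2)*(1-t^2/(a^2*b^2))) * (b^4/(b^2+t^2)^2) := by
  have h := den2_pos ha hab ht0 ht1
  have ha0 : (0:ℝ) < a := by linarith
  have hb0 : (0:ℝ) < b := by linarith
  have hb1 : (0:ℝ) < 1 + b^2 := by nlinarith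
  rw [tau2, k2]
  field_simp
  ring

lemma fK_tau1_eq : fK (k1 a b) (tau1 b t) = (b^2-t^2)^2 / (b^4 * Real.sqrt (Pf a b t)) := by
  have hd := den1_pos ha hab ht0 ht1
  have hb0 : (0:ℝ) < b := by linarith
  have hP := Pf_pos ha hab ht0 ht1
  have hc : (0:ℝ) < b^4/(b^2-t^2)^2 := by positivity
  have h3 : (1 - (tau1 b t)^2) * (1 - (k1 a b)^2 * (tau1 b t)^2)
      = Pf a b t * (b^4/(b^2-t^2)^2)^2 := by
    rw [one_sub_tau1_sq ha hab ht0 ht1, one_sub_k1_tau1_sq ha hab ht0 ht1, Pf]; ring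
  rw [fK, h3, Real.sqrt_mul hP.le, Real.sqrt_sq hc.le]
  have hs : (0:ℝ) < Real.sqrt (Pf a b t) := Real.sqrt_pos.mpr hP
  field_simp

lemma fE_tau1_eq : fE (k1 a b) (tau1 b t) =
    ((1-a^2*t^2/b^2)*(1-t^2/(a^2*b^2))) / Real.sqrt (Pf a b t) := by
  have hd := den1_pos ha hab ht0 ht1
  have hb0 : (0:ℝ) < b := by linarith
  have hA : (0:ℝ) < (1-t^2)*(1-t^2/b^4) :=
    mul_pos (w1_pos ht0 ht1) (w4_pos ha hab ht0 ht1)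
  have hB : (0:ℝ) < (1-a^2*t^2/b^2)*(1-t^2/(a^2*b^2)) :=
    mul_pos (w2_pos ha hab ht0 ht1) (w3_pos ha hab ht0 ht1)
  have hc : (0:ℝ) < b^4/(b^2-t^2)^2 := by positivity
  have hPf : Pf a b t = ((1-t^2)*(1-t^2/b^4)) * ((1-a^2*t^2/b^2)*(1-t^2/(a^2*b^2))) := by
    rw [Pf]; ring
  rw [fE, one_sub_tau1_sq ha hab ht0 ht1, one_sub_k1_tau1_sq ha hab ht0 ht1,
    Real.sqrt_mul hB.le, Real.sqrt_mul hA.le, hPf, Real.sqrt_mul hA.le,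
    mul_div_mul_right _ _ (Real.sqrt_pos.mpr hc).ne']
  rw [div_eq_div_iff (Real.sqrt_pos.mpr hA).ne' (by positivity : (0:ℝ) < Real.sqrt ((1-t^2)*(1-t^2/b^4)) * Real.sqrt ((1-a^2*t^2/b^2)*(1-t^2/(a^2*b^2)))).ne']
  rw [mul_comm (Real.sqrt ((1-t^2)*(1-t^2/b^4))), ← mul_assoc, Real.mul_self_sqrt hB.le]

lemma fK_tau2_eq : fK (k2 a b) (tau2 b t) = (b^2+t^2)^2 / (b^4 * Real.sqrt (Pf a b t)) := by
  have hd := den2_pos ha hab ht0 ht1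
  have hb0 : (0:ℝ) < b := by linarith
  have hP := Pf_pos ha hab ht0 ht1
  have hc : (0:ℝ) < b^4/(b^2+t^2)^2 := by positivity
  have h3 : (1 - (tau2 b t)^2) * (1 - (k2 a b)^2 * (tau2 b t)^2)
      = Pf a b t * (b^4/(b^2+t^2)^2)^2 := by
    rw [one_sub_tau2_sq ha hab ht0 ht1, one_sub_k2_tau2_sq ha hab ht0 ht1, Pf]; ring
  rw [fK, h3, Real.sqrt_mul hP.le, Real.sqrt_sq hc.le]
  have hs : (0:ℝ) < Real.sqrt (Pf a b t) := Real.sqrt_pos.mpr hP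
  field_simp

lemma fE_tau2_eq : fE (k2 a b) (tau2 b t) =
    ((1-a^2*t^2/b^2)*(1-t^2/(a^2*b^2))) / Real.sqrt (Pf a b t) := by
  have hd := den2_pos ha hab ht0 ht1
  have hb0 : (0:ℝ) < b := by linarith
  have hA : (0:ℝ) < (1-t^2)*(1-t^2/b^4) :=
    mul_pos (w1_pos ht0 ht1) (w4_pos ha hab ht0 ht1)
  have hB : (0:ℝ) < (1-a^2*t^2/b^2)*(1-t^2/(a^2*b^2)) :=
    mul_pos (w2_pos ha hab ht0 ht1) (w3_pos ha hab ht0 ht1)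
  have hc : (0:ℝ) < b^4/(b^2+t^2)^2 := by positivity
  have hPf : Pf a b t = ((1-t^2)*(1-t^2/b^4)) * ((1-a^2*t^2/b^2)*(1-t^2/(a^2*b^2))) := by
    rw [Pf]; ring
  rw [fE, one_sub_tau2_sq ha hab ht0 ht1, one_sub_k2_tau2_sq ha hab ht0 ht1,
    Real.sqrt_mul hB.le, Real.sqrt_mul hA.le, hPf, Real.sqrt_mul hA.le,
    mul_div_mul_right _ _ (Real.sqrt_pos.mpr hc).ne']
  rw [div_eq_div_iff (Real.sqrt_pos.mpr hA).ne' (by positivity : (0:ℝ) < Real.sqrt ((1-t^2)*(1-t^2/b^4)) * Real.sqrt ((1-a^2*t^2/b^2)*(1-t^2/(a^2*b^2)))).ne']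
  rw [mul_comm (Real.sqrt ((1-t^2)*(1-t^2/b^4))), ← mul_assoc, Real.mul_self_sqrt hB.le]

lemma hasDerivAt_tau1 : HasDerivAt (tau1 b) ((b^2-1)*(b^2+t^2)/(b^2-t^2)^2) t := by
  have hd := (den1_pos ha hab ht0 ht1).ne'
  have h1 : HasDerivAt (fun s : ℝ => (b^2-1)*s) (b^2-1) t := by
    simpa using (hasDerivAt_id t).const_mul (b^2-1)
  have h2 : HasDerivAt (fun s : ℝ => b^2 - s^2) (-(2*t)) t := by
    simpa using (hasDerivAt_pow 2 t).const_sub (b^2)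
  have := h1.div h2 hd
  refine this.congr_deriv ?_
  congr 1
  ring

lemma hasDerivAt_tau2 : HasDerivAt (tau2 b) ((1+b^2)*(b^2-t^2)/(b^2+t^2)^2) t := by
  have hd := (den2_pos ha hab ht0 ht1).ne'
  have h1 : HasDerivAt (fun s : ℝ => (1+b^2)*s) (1+b^2) t := by
    simpa using (hasDerivAt_id t).const_mul (1+b^2)
  have h2 : HasDerivAt (fun s : ℝ => b^2 + s^2) (2*t) t := by
    simpa using (hasDerivAt_pow 2 t).const_add (b^2)
  have := h1.div h2 hd
  refine this.congr_deriv ?_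
  congr 1
  ring

omit ha hab ht0 ht1 in
lemma hasDerivAt_Pf' (a' b' s : ℝ) : HasDerivAt (fun x => Pf a' b' x) (dPf a' b' s) s := by
  have h1 : HasDerivAt (fun x : ℝ => 1 - x^2) (-(2*s)) s := by
    have := (hasDerivAt_pow 2 s).const_sub 1
    refine this.congr_deriv ?_; push_cast; ring
  have h2 : HasDerivAt (fun x : ℝ => 1 - a'^2*x^2/b'^2) (-(2*a'^2*s/b'^2)) s := by
    have := (((hasDerivAt_pow 2 s).const_mul (a'^2)).div_const (b'^2)).const_sub 1
    refine this.congr_deriv ?_; push_cast; ring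
  have h3 : HasDerivAt (fun x : ℝ => 1 - x^2/(a'^2*b'^2)) (-(2*s/(a'^2*b'^2))) s := by
    have := ((hasDerivAt_pow 2 s).div_const (a'^2*b'^2)).const_sub 1
    refine this.congr_deriv ?_; push_cast; ring
  have h4 : HasDerivAt (fun x : ℝ => 1 - x^2/b'^4) (-(2*s/b'^4)) s := by
    have := ((hasDerivAt_pow 2 s).div_const (b'^4)).const_sub 1
    refine this.congr_deriv ?_; push_cast; ring
  have := ((h1.mul h2).mul h3).mul h4
  simp only [Pf]
  refine this.congr_deriv ?_
  rw [dPf]; simp only [Pi.mul_apply]; ring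

lemma hasDerivAt_Cf : HasDerivAt (fun s => Cf a b s)
    (((Pf a b t + t * dPf a b t/2)*(b^4-t^4) + 4*t^4*Pf a b t)
      / (Real.sqrt (Pf a b t)*(b^4-t^4)^2)) t := by
  have hP := Pf_pos ha hab ht0 ht1
  have hb1 : (1:ℝ) < b := by linarith
  have hden : (0:ℝ) < b^4 - t^4 := by
    have h2 := ht2' ht0 ht1
    have h4 : t^4 < 1 := by nlinarith [sq_nonneg t]
    have hb2 : (1:ℝ) < b^2 := by nlinarith
    have : (1:ℝ) < b^4 := by nlinarith
    linarith
  have hX : (0:ℝ) < Real.sqrt (Pf a b t) := Real.sqrt_pos.mpr hP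
  have hsq : HasDerivAt (fun s => Real.sqrt (Pf a b s)) (dPf a b t / (2*Real.sqrt (Pf a b t))) t := by
    have := (Real.hasDerivAt_sqrt hP.ne').comp t (hasDerivAt_Pf' a b t)
    refine this.congr_deriv ?_
    try ring
  have hnum : HasDerivAt (fun s => s * Real.sqrt (Pf a b s))
      (1 * Real.sqrt (Pf a b t) + t * (dPf a b t / (2*Real.sqrt (Pf a b t)))) t :=
    (hasDerivAt_id t).mul hsq
  have hden' : HasDerivAt (fun x : ℝ => b^4 - x^4) (-(4*t^3)) t := by
    have := (hasDerivAt_pow 4 t).const_sub (b^4)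
    refine this.congr_deriv ?_
    norm_num
    try ring
  have hdiv := hnum.div hden' hden.ne'
  simp only [Cf]
  refine hdiv.congr_deriv ?_
  set X := Real.sqrt (Pf a b t) with hXdef
  have hX2 : X^2 = Pf a b t := Real.sq_sqrt hP.le
  rw [← hX2]
  field_simp
  ring

end vals

lemma contOn_fK (k : ℝ) (hk0 : 0 ≤ k) (hk1 : k < 1) :
    ContinuousOn (fK k) (Ioo (-1:ℝ) 1) := by
  have hpos : ∀ τ ∈ Ioo (-1:ℝ) 1, 0 < (1 - τ^2) * (1 - k^2*τ^2) := by
    intro τ hτ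
    have hτ2 : τ^2 < 1 := by nlinarith [hτ.1, hτ.2]
    have hk2 : k^2 < 1 := by nlinarith
    have : k^2*τ^2 < 1 := by nlinarith [mul_nonneg (sq_nonneg τ) (sub_nonneg.mpr hk2.le)]
    nlinarith
  apply ContinuousOn.div continuousOn_const
  · exact (Real.continuous_sqrt.comp (by continuity)).continuousOn
  · exact fun τ hτ => (Real.sqrt_pos.mpr (hpos τ hτ)).ne'

lemma contOn_fE (k : ℝ) (hk0 : 0 ≤ k) (hk1 : k < 1) :
    ContinuousOn (fE k) (Ioo (-1:ℝ) 1) := by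
  have hpos : ∀ τ ∈ Ioo (-1:ℝ) 1, 0 < 1 - τ^2 := by
    intro τ hτ; nlinarith [hτ.1, hτ.2]
  apply ContinuousOn.div
  · exact (Real.continuous_sqrt.comp (by continuity)).continuousOn
  · exact (Real.continuous_sqrt.comp (by continuity)).continuousOn
  · exact fun τ hτ => (Real.sqrt_pos.mpr (hpos τ hτ)).ne'

lemma contOn_fJ (a b : ℝ) (ha : 1 < a) (hab : a < b) :
    ContinuousOn (fJ a b) (Iio (1:ℝ)) := by
  have hfj : fJ a b = fun u => u ^ ((3:ℝ)/2) * (1 - u) ^ (-(1/2) : ℝ) * (1 - a^2/b^2 * u) ^ (-(1/2) : ℝ) *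
    (1 - 1/(a^2*b^2) * u) ^ (-(1/2) : ℝ) * (1 - 1/b^4 * u) ^ (-(1/2) : ℝ) := rfl
  rw [hfj]
  have ha0 : (0:ℝ) < a := by linarith
  have hb0 : (0:ℝ) < b := by linarith
  have hb1 : (1:ℝ) < b := by linarith
  have ha2 : (1:ℝ) < a^2 := by nlinarith
  have hb2 : (1:ℝ) < b^2 := by nlinarith
  have hbase : ∀ (x : ℝ), 0 < x → x < 1 → ∀ u ∈ Iio (1:ℝ), (1 - x * u) ≠ 0 := by
    intro x hx0 hx1 u hu
    have : x * (1-u) > 0 := mul_pos hx0 (by simpa [sub_pos] using hu)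
    nlinarith
  have hx1 : a^2/b^2 < 1 := by rw [div_lt_one (by positivity)]; nlinarith
  have hx2 : 1/(a^2*b^2) < 1 := by rw [div_lt_one (by positivity)]; nlinarith
  have hx3 : 1/b^4 < 1 := by rw [div_lt_one (by positivity)]; nlinarith [mul_pos (mul_pos hb0 hb0) (mul_pos hb0 hb0)]
  apply ContinuousOn.mul
  apply ContinuousOn.mul
  apply ContinuousOn.mul
  apply ContinuousOn.mul
  · exact fun u hu => ((Real.continuousAt_rpow_const u _ (Or.inr (by norm_num))).continuousWithinAt)
  · exact (continuousOn_const.sub continuousOn_id).rpow_const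
      (fun u hu => Or.inl (sub_pos.mpr hu).ne')
  · exact (continuousOn_const.sub (continuousOn_const.mul continuousOn_id)).rpow_const
      (fun u hu => Or.inl (hbase _ (by positivity) hx1 u hu))
  · exact (continuousOn_const.sub (continuousOn_const.mul continuousOn_id)).rpow_const
      (fun u hu => Or.inl (hbase _ (by positivity) hx2 u hu))
  · exact (continuousOn_const.sub (continuousOn_const.mul continuousOn_id)).rpow_const
      (fun u hu => Or.inl (hbase _ (by positivity) hx3 u hu))
section key
variable {a b t : ℝ} (ha : 1 < a) (hab : a < b) (ht0 : 0 ≤ t) (ht1 : t < 1)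
include ha hab ht0 ht1

lemma fJ_sq_eq : fJ a b (t^2) * (2*t) = 2*t^4 / Real.sqrt (Pf a b t) := by
  have hw1 := w1_pos ht0 ht1
  have hw2 := w2_pos ha hab ht0 ht1
  have hw3 := w3_pos ha hab ht0 ht1
  have hw4 := w4_pos ha hab ht0 ht1
  have ha0 : (0:ℝ) < a := by linarith
  have hb0 : (0:ℝ) < b := by linarith
  have h32 : ((t^2 : ℝ)) ^ ((3:ℝ)/2) = t^3 := by
    rw [← Real.rpow_natCast t 2, ← Real.rpow_mul ht0]
    norm_num
  have e1 : ((1:ℝ) - t^2) ^ (-(1/2) : ℝ) = (Real.sqrt (1-t^2))⁻¹ :=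
    rpow_neg_half_eq _ hw1.le
  have e2 : ((1:ℝ) - a^2/b^2 * t^2) ^ (-(1/2) : ℝ) = (Real.sqrt (1-a^2*t^2/b^2))⁻¹ := by
    rw [show (1:ℝ) - a^2/b^2 * t^2 = 1 - a^2*t^2/b^2 by ring]
    exact rpow_neg_half_eq _ hw2.le
  have e3 : ((1:ℝ) - 1/(a^2*b^2) * t^2) ^ (-(1/2) : ℝ) = (Real.sqrt (1-t^2/(a^2*b^2)))⁻¹ := by
    rw [show (1:ℝ) - 1/(a^2*b^2) * t^2 = 1 - t^2/(a^2*b^2) by ring]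
    exact rpow_neg_half_eq _ hw3.le
  have e4 : ((1:ℝ) - 1/b^4 * t^2) ^ (-(1/2) : ℝ) = (Real.sqrt (1-t^2/b^4))⁻¹ := by
    rw [show (1:ℝ) - 1/b^4 * t^2 = 1 - t^2/b^4 by ring]
    exact rpow_neg_half_eq _ hw4.le
  have hsP : Real.sqrt (Pf a b t) = Real.sqrt (1-t^2) * Real.sqrt (1-a^2*t^2/b^2) *
      Real.sqrt (1-t^2/(a^2*b^2)) * Real.sqrt (1-t^2/b^4) := by
    rw [Pf, Real.sqrt_mul (by positivity), Real.sqrt_mul (by positivity),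
      Real.sqrt_mul (by positivity)]
  have hs1 : (0:ℝ) < Real.sqrt (1-t^2) := Real.sqrt_pos.mpr hw1
  have hs2 : (0:ℝ) < Real.sqrt (1-a^2*t^2/b^2) := Real.sqrt_pos.mpr hw2
  have hs3 : (0:ℝ) < Real.sqrt (1-t^2/(a^2*b^2)) := Real.sqrt_pos.mpr hw3
  have hs4 : (0:ℝ) < Real.sqrt (1-t^2/b^4) := Real.sqrt_pos.mpr hw4
  rw [fJ, h32, e1, e2, e3, e4, hsP]
  field_simp

set_option maxHeartbeats 3200000 in
lemma key_identity {X : ℝ} (hX : X ≠ 0) :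
    2*t^4 / X
    - b^4*( (b^4-b^2+1)/(b^2-1) *
              ((b^2-t^2)^2/(b^4*X) * ((b^2-1)*(b^2+t^2)/(b^2-t^2)^2))
          - (b^4+b^2+1)/(1+b^2) *
              ((b^2+t^2)^2/(b^4*X) * ((1+b^2)*(b^2-t^2)/(b^2+t^2)^2))
          + ((1-b^2) * ((1-a^2*t^2/b^2)*(1-t^2/(a^2*b^2))/X * ((b^2-1)*(b^2+t^2)/(b^2-t^2)^2))
            + (1+b^2) * ((1-a^2*t^2/b^2)*(1-t^2/(a^2*b^2))/X * ((1+b^2)*(b^2-t^2)/(b^2+t^2)^2))) )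
    + 2*b^8 * (((Pf a b t + t * dPf a b t/2)*(b^4-t^4) + 4*t^4*Pf a b t)
        / (X*(b^4-t^4)^2)) = 0 := by
  have ha0 : (0:ℝ) < a := by linarith
  have hb0 : (0:ℝ) < b := by linarith
  have hb1 : (1:ℝ) < b := by linarith
  have hb2 : (1:ℝ) < b^2 := by nlinarith
  have h2 := ht2' ht0 ht1
  have hd1 : (0:ℝ) < b^2 - t^2 := den1_pos ha hab ht0 ht1
  have hd2 : (0:ℝ) < b^2 + t^2 := den2_pos ha hab ht0 ht1
  have hd4 : (0:ℝ) < b^4 - t^4 := by nlinarith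
  have hbm1 : b^2 - 1 ≠ 0 := by nlinarith
  have hbp1 : 1 + b^2 ≠ 0 := by nlinarith
  rw [Pf, dPf]
  field_simp
  ring
end key
lemma sq_mod_lt_one {k τ : ℝ} (hk0 : 0 ≤ k) (hk1 : k < 1) (h0 : 0 ≤ τ) (h1 : τ ≤ 1) :
    k ^ 2 * τ ^ 2 < 1 := by
  have h2 : k ^ 2 < 1 := by nlinarith
  have h3 : τ ^ 2 ≤ 1 := by nlinarith
  nlinarith [sq_nonneg k]

lemma integrable_one_sub_rpow : IntervalIntegrable (fun u : ℝ => (1 - u) ^ (-(1/2) : ℝ)) volume 0 1 := by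
  have h : IntervalIntegrable (fun x : ℝ => x ^ (-(1/2) : ℝ)) volume 0 1 :=
    intervalIntegral.intervalIntegrable_rpow' (by norm_num)
  have := (h.comp_sub_left 1).symm
  simpa using this

lemma integrable_fK (k : ℝ) (hk0 : 0 ≤ k) (hk1 : k < 1) :
    IntervalIntegrable (fK k) volume 0 1 := by
  have key : IntervalIntegrable
      (fun τ : ℝ => (Real.sqrt ((1 + τ) * (1 - k ^ 2 * τ ^ 2)))⁻¹ * (1 - τ) ^ (-(1/2) : ℝ))
      volume 0 1 := by
    apply integrable_one_sub_rpow.continuousOn_mul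
    have hpos : ∀ τ ∈ uIcc (0:ℝ) 1, 0 < (1 + τ) * (1 - k ^ 2 * τ ^ 2) := by
      intro τ hτ
      rw [uIcc_of_le (by norm_num)] at hτ
      have := sq_mod_lt_one hk0 hk1 hτ.1 hτ.2
      nlinarith [hτ.1]
    apply ContinuousOn.inv₀
    · exact (Real.continuous_sqrt.comp (by continuity)).continuousOn
    · exact fun τ hτ => (Real.sqrt_pos.mpr (hpos τ hτ)).ne'
  rw [intervalIntegrable_iff_integrableOn_Ioc_of_le (by norm_num)] at key ⊢
  apply key.congr_fun _ measurableSet_Ioc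
  intro τ hτ
  obtain ⟨h0, h1⟩ := hτ
  have hk2 : 0 ≤ 1 - k ^ 2 * τ ^ 2 := by
    have := sq_mod_lt_one hk0 hk1 h0.le h1; linarith
  have h1p : (0:ℝ) ≤ 1 + τ := by linarith
  simp only [fK]
  rw [rpow_neg_half_eq _ (by linarith : (0:ℝ) ≤ 1 - τ), one_div,
    ← mul_inv, ← Real.sqrt_mul (mul_nonneg h1p hk2)]
  congr 2
  ring

lemma integrable_fE (k : ℝ) (hk0 : 0 ≤ k) (hk1 : k < 1) :
    IntervalIntegrable (fE k) volume 0 1 := by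
  have key : IntervalIntegrable
      (fun τ : ℝ => Real.sqrt (1 - k ^ 2 * τ ^ 2) * (Real.sqrt (1 + τ))⁻¹ * (1 - τ) ^ (-(1/2) : ℝ))
      volume 0 1 := by
    apply integrable_one_sub_rpow.continuousOn_mul
    apply ContinuousOn.mul
    · exact (Real.continuous_sqrt.comp (by continuity)).continuousOn
    · apply ContinuousOn.inv₀
      · exact (Real.continuous_sqrt.comp (by continuity)).continuousOn
      · intro τ hτ
        rw [uIcc_of_le (by norm_num)] at hτ
        have : (0:ℝ) < 1 + τ := by linarith [hτ.1]
        exact (Real.sqrt_pos.mpr this).ne'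
  rw [intervalIntegrable_iff_integrableOn_Ioc_of_le (by norm_num)] at key ⊢
  apply key.congr_fun _ measurableSet_Ioc
  intro τ hτ
  obtain ⟨h0, h1⟩ := hτ
  have h1p : (0:ℝ) ≤ 1 + τ := by linarith
  simp only [fE]
  rw [rpow_neg_half_eq _ (by linarith : (0:ℝ) ≤ 1 - τ), div_eq_mul_inv, mul_assoc,
    ← mul_inv, ← Real.sqrt_mul h1p]
  congr 3
  ring

lemma integrable_fJ (a b : ℝ) (ha : 1 < a) (hab : a < b) :
    IntervalIntegrable (fJ a b) volume 0 1 := by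
  have ha0 : (0:ℝ) < a := by linarith
  have hb0 : (0:ℝ) < b := by linarith
  have hx1 : a^2/b^2 < 1 := by
    rw [div_lt_one (by positivity)]; nlinarith [sq_nonneg (b^2-1)]
  have hx1p : 0 < a^2/b^2 := by positivity
  have hb1 : (1:ℝ) < b := by linarith
  have ha2 : (1:ℝ) < a^2 := by nlinarith
  have hb2 : (1:ℝ) < b^2 := by nlinarith
  have hx2 : 1/(a^2*b^2) < 1 := by
    rw [div_lt_one (by positivity)]; nlinarith [sq_nonneg (b^2-1)]
  have hx2p : 0 < 1/(a^2*b^2) := by positivity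
  have hx3 : 1/b^4 < 1 := by
    rw [div_lt_one (by positivity)]; nlinarith [sq_nonneg (b^2-1)]
  have hx3p : 0 < 1/b^4 := by positivity
  have key : IntervalIntegrable
      (fun u : ℝ => (u ^ ((3:ℝ)/2) * (1 - a^2/b^2 * u) ^ (-(1/2) : ℝ) *
        (1 - 1/(a^2*b^2) * u) ^ (-(1/2) : ℝ) * (1 - 1/b^4 * u) ^ (-(1/2) : ℝ)) *
        (1 - u) ^ (-(1/2) : ℝ)) volume 0 1 := by
    apply integrable_one_sub_rpow.continuousOn_mul
    have hbase : ∀ (x : ℝ), 0 < x → x < 1 → ∀ u ∈ uIcc (0:ℝ) 1, (1 - x * u) ≠ 0 := by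
      intro x hx0 hx1 u hu
      rw [uIcc_of_le (by norm_num)] at hu
      nlinarith [hu.1, hu.2]
    apply ContinuousOn.mul
    apply ContinuousOn.mul
    apply ContinuousOn.mul
    · exact fun u hu => ((Real.continuousAt_rpow_const u _ (Or.inr (by norm_num))).continuousWithinAt)
    · exact (continuousOn_const.sub (continuousOn_const.mul continuousOn_id)).rpow_const
        (fun u hu => Or.inl (hbase _ hx1p hx1 u hu))
    · exact (continuousOn_const.sub (continuousOn_const.mul continuousOn_id)).rpow_const
        (fun u hu => Or.inl (hbase _ hx2p hx2 u hu))
    · exact (continuousOn_const.sub (continuousOn_const.mul continuousOn_id)).rpow_const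
        (fun u hu => Or.inl (hbase _ hx3p hx3 u hu))
  have : fJ a b = fun u => (u ^ ((3:ℝ)/2) * (1 - a^2/b^2 * u) ^ (-(1/2) : ℝ) *
        (1 - 1/(a^2*b^2) * u) ^ (-(1/2) : ℝ) * (1 - 1/b^4 * u) ^ (-(1/2) : ℝ)) *
        (1 - u) ^ (-(1/2) : ℝ) := by
    funext u; simp only [fJ]; ring
  rw [this]
  exact key
set_option maxHeartbeats 1000000 in
lemma mainId (a b : ℝ) (ha : 1 < a) (hab : a < b) :
    (∫ u in (0:ℝ)..1, fJ a b u) =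
      b^4 * ( ((b^4-b^2+1)/(b^2-1) * (∫ τ in (0:ℝ)..1, fK (k1 a b) τ)
             - (b^4+b^2+1)/(1+b^2) * (∫ τ in (0:ℝ)..1, fK (k2 a b) τ))
            + ((1-b^2) * (∫ τ in (0:ℝ)..1, fE (k1 a b) τ)
             + (1+b^2) * (∫ τ in (0:ℝ)..1, fE (k2 a b) τ)) ) := by
  have ha0 : (0:ℝ) < a := by linarith
  have hb0 : (0:ℝ) < b := by linarith
  have hb1 : (1:ℝ) < b := by linarith
  have ha2 : (1:ℝ) < a^2 := by nlinarith
  have hb2 : (1:ℝ) < b^2 := by nlinarith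
  have hb4 : (1:ℝ) < b^4 := by nlinarith
  have hk10 : 0 ≤ k1 a b := by
    rw [k1]
    apply div_nonneg <;> nlinarith
  have hk11 : k1 a b < 1 := by
    rw [k1, div_lt_one (by nlinarith)]
    nlinarith [mul_pos (sub_pos.mpr hab) (by positivity : (0:ℝ) < a*b+1)]
  have hk20 : 0 ≤ k2 a b := by
    rw [k2]
    apply div_nonneg <;> nlinarith
  have hk21 : k2 a b < 1 := by
    rw [k2, div_lt_one (by nlinarith)]
    nlinarith [mul_pos (sub_pos.mpr hab) (by nlinarith : (0:ℝ) < a*b-1)]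
  have iJ := integrable_fJ a b ha hab
  have iK1 := integrable_fK _ hk10 hk11
  have iK2 := integrable_fK _ hk20 hk21
  have iE1 := integrable_fE _ hk10 hk11
  have iE2 := integrable_fE _ hk20 hk21
  -- membership facts
  have hsq1 : ∀ t ∈ Icc (0:ℝ) 1, t^2 ≤ 1 := by
    intro t ht
    nlinarith [ht.1, ht.2, mul_nonneg (sub_nonneg.2 ht.2) (by linarith [ht.1] : (0:ℝ) ≤ 1 + t)]
  have hsqmem : MapsTo (fun t : ℝ => t^2) (Icc 0 1) (Icc (0:ℝ) 1) := by
    intro t ht; exact ⟨sq_nonneg t, hsq1 t ht⟩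
  have hden1 : ∀ t ∈ Icc (0:ℝ) 1, b^2 - t^2 ≠ 0 := by
    intro t ht; nlinarith [hsq1 t ht]
  have hden2 : ∀ t ∈ Icc (0:ℝ) 1, b^2 + t^2 ≠ 0 := by
    intro t ht; nlinarith [ht.1, ht.2]
  have hden4 : ∀ t ∈ Icc (0:ℝ) 1, b^4 - t^4 ≠ 0 := by
    intro t ht
    have h1 := hsq1 t ht
    have h2 : t^4 ≤ 1 := by nlinarith [sq_nonneg t]
    nlinarith
  have htau1mem : MapsTo (tau1 b) (Icc 0 1) (Icc (0:ℝ) 1) := by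
    intro t ht
    have h1 : (0:ℝ) < b^2 - t^2 := by nlinarith [hsq1 t ht]
    constructor
    · rw [tau1]; apply div_nonneg <;> nlinarith [ht.1, hsq1 t ht]
    · rw [tau1, div_le_one h1]; nlinarith [ht.1, ht.2]
  have htau2mem : MapsTo (tau2 b) (Icc 0 1) (Icc (0:ℝ) 1) := by
    intro t ht
    have h1 : (0:ℝ) < b^2 + t^2 := by nlinarith [ht.1, ht.2]
    constructor
    · rw [tau2]; apply div_nonneg <;> nlinarith [ht.1, hsq1 t ht]
    · rw [tau2, div_le_one h1]; nlinarith [ht.1, ht.2, mul_nonneg (sub_nonneg.2 ht.2) ht.1]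
  -- primitives are continuous
  have mkprim : ∀ (f : ℝ → ℝ), IntervalIntegrable f volume 0 1 →
      ContinuousOn (fun x => ∫ s in (0:ℝ)..x, f s) (Icc 0 1) := by
    intro f hf
    have : IntegrableOn f (uIcc (0:ℝ) 1) volume := by
      rw [uIcc_of_le zero_le_one, integrableOn_Icc_iff_integrableOn_Ioc]
      exact (intervalIntegrable_iff_integrableOn_Ioc_of_le zero_le_one).mp hf
    have := intervalIntegral.continuousOn_primitive_interval this
    rwa [uIcc_of_le zero_le_one] at this
  have hconttau1 : ContinuousOn (tau1 b) (Icc 0 1) := by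
    have e : tau1 b = fun t : ℝ => (b^2-1)*t/(b^2-t^2) := rfl
    rw [e]
    exact ((continuous_const.mul continuous_id).continuousOn).div
      ((continuous_const.sub (continuous_pow 2)).continuousOn) hden1
  have hconttau2 : ContinuousOn (tau2 b) (Icc 0 1) := by
    have e : tau2 b = fun t : ℝ => (1+b^2)*t/(b^2+t^2) := rfl
    rw [e]
    exact ((continuous_const.mul continuous_id).continuousOn).div
      ((continuous_const.add (continuous_pow 2)).continuousOn) hden2
  have hcontPf : Continuous (fun t : ℝ => Pf a b t) := by
    simp only [Pf]; fun_prop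
  have hcontCf : ContinuousOn (fun t => Cf a b t) (Icc 0 1) := by
    simp only [Cf]
    exact ((continuous_id.mul (Real.continuous_sqrt.comp hcontPf)).continuousOn).div
      ((continuous_const.sub (continuous_pow 4)).continuousOn) hden4
  set A1 := (b^4-b^2+1)/(b^2-1) with hA1
  set A2 := (b^4+b^2+1)/(1+b^2) with hA2
  set B1 := (1-b^2) with hB1
  set B2 := (1+b^2) with hB2
  set G : ℝ → ℝ := fun s =>
    (∫ u in (0:ℝ)..s^2, fJ a b u)
    - b^4 * ( A1 * (∫ τ in (0:ℝ)..tau1 b s, fK (k1 a b) τ)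
            - A2 * (∫ τ in (0:ℝ)..tau2 b s, fK (k2 a b) τ)
            + (B1 * (∫ τ in (0:ℝ)..tau1 b s, fE (k1 a b) τ)
             + B2 * (∫ τ in (0:ℝ)..tau2 b s, fE (k2 a b) τ)) )
    + 2*b^8 * Cf a b s with hGdef
  have hcontG : ContinuousOn G (Icc 0 1) := by
    rw [hGdef]
    apply ContinuousOn.add
    apply ContinuousOn.sub
    · exact (mkprim _ iJ).comp ((continuous_pow 2).continuousOn) hsqmem
    · apply continuousOn_const.mul
      apply ContinuousOn.add
      apply ContinuousOn.sub
      · exact continuousOn_const.mul ((mkprim _ iK1).comp hconttau1 htau1mem)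
      · exact continuousOn_const.mul ((mkprim _ iK2).comp hconttau2 htau2mem)
      · exact (continuousOn_const.mul ((mkprim _ iE1).comp hconttau1 htau1mem)).add
          (continuousOn_const.mul ((mkprim _ iE2).comp hconttau2 htau2mem))
    · exact continuousOn_const.mul hcontCf
  have hderiv : ∀ t ∈ Ico (0:ℝ) 1, HasDerivWithinAt G 0 (Ici t) t := by
    intro t ht
    obtain ⟨ht0, ht1⟩ := ht
    have ht2 : t^2 < 1 := ht2' ht0 ht1
    have hd1 : (0:ℝ) < b^2 - t^2 := den1_pos ha hab ht0 ht1
    have hd2 : (0:ℝ) < b^2 + t^2 := den2_pos ha hab ht0 ht1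
    -- tau values in [0,1)
    have htau1lt : tau1 b t < 1 := by
      rw [tau1, div_lt_one hd1]; nlinarith
    have htau1ge : 0 ≤ tau1 b t := by
      rw [tau1]; apply div_nonneg <;> nlinarith
    have htau2lt : tau2 b t < 1 := by
      rw [tau2, div_lt_one hd2]; nlinarith
    have htau2ge : 0 ≤ tau2 b t := by
      rw [tau2]; apply div_nonneg <;> nlinarith
    -- derivative of J-part
    have hparab : HasDerivAt (fun s : ℝ => s^2) (2*t) t := by
      simpa using hasDerivAt_pow 2 t
    have hsubJ : uIcc (0:ℝ) (t^2) ⊆ uIcc (0:ℝ) 1 :=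
      uIcc_subset_uIcc left_mem_uIcc (by
        rw [uIcc_of_le zero_le_one]; exact ⟨sq_nonneg t, ht2.le⟩)
    have hdJ : HasDerivAt (fun s => ∫ u in (0:ℝ)..(s^2 : ℝ), fJ a b u)
        (fJ a b (t^2) * (2*t)) t := by
      have hmem : t^2 ∈ Iio (1:ℝ) := ht2
      have h0 := intervalIntegral.integral_hasDerivAt_right (iJ.mono_set hsubJ)
        ((contOn_fJ a b ha hab).stronglyMeasurableAtFilter isOpen_Iio _ hmem)
        ((contOn_fJ a b ha hab).continuousAt (Iio_mem_nhds ht2))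
      have h1 : HasDerivAt ((fun x => ∫ u in (0:ℝ)..x, fJ a b u) ∘ (fun s : ℝ => s^2))
          (fJ a b (t^2) * (2*t)) t := HasDerivAt.comp t h0 hparab
      exact h1
    -- derivative helper for K/E primitives
    have mkd : ∀ (f : ℝ → ℝ), IntervalIntegrable f volume 0 1 →
        ContinuousOn f (Ioo (-1:ℝ) 1) →
        ∀ (τv : ℝ), 0 ≤ τv → τv < 1 →
        HasDerivAt (fun x => ∫ s in (0:ℝ)..x, f s) (f τv) τv := by
      intro f hf hcont τv hτ0 hτ1
      have hmem : τv ∈ Ioo (-1:ℝ) 1 := ⟨by linarith, hτ1⟩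
      exact intervalIntegral.integral_hasDerivAt_right
        (hf.mono_set (uIcc_subset_uIcc left_mem_uIcc (by
          rw [uIcc_of_le zero_le_one]; exact ⟨hτ0, hτ1.le⟩)))
        (hcont.stronglyMeasurableAtFilter isOpen_Ioo _ hmem)
        (hcont.continuousAt (Ioo_mem_nhds hmem.1 hmem.2))
    have hdK1 : HasDerivAt (fun s => ∫ τ in (0:ℝ)..tau1 b s, fK (k1 a b) τ)
        (fK (k1 a b) (tau1 b t) * ((b^2-1)*(b^2+t^2)/(b^2-t^2)^2)) t :=
      HasDerivAt.comp t (mkd _ iK1 (contOn_fK _ hk10 hk11) _ htau1ge htau1lt)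
        (hasDerivAt_tau1 ha hab ht0 ht1)
    have hdE1 : HasDerivAt (fun s => ∫ τ in (0:ℝ)..tau1 b s, fE (k1 a b) τ)
        (fE (k1 a b) (tau1 b t) * ((b^2-1)*(b^2+t^2)/(b^2-t^2)^2)) t :=
      HasDerivAt.comp t (mkd _ iE1 (contOn_fE _ hk10 hk11) _ htau1ge htau1lt)
        (hasDerivAt_tau1 ha hab ht0 ht1)
    have hdK2 : HasDerivAt (fun s => ∫ τ in (0:ℝ)..tau2 b s, fK (k2 a b) τ)
        (fK (k2 a b) (tau2 b t) * ((1+b^2)*(b^2-t^2)/(b^2+t^2)^2)) t :=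
      HasDerivAt.comp t (mkd _ iK2 (contOn_fK _ hk20 hk21) _ htau2ge htau2lt)
        (hasDerivAt_tau2 ha hab ht0 ht1)
    have hdE2 : HasDerivAt (fun s => ∫ τ in (0:ℝ)..tau2 b s, fE (k2 a b) τ)
        (fE (k2 a b) (tau2 b t) * ((1+b^2)*(b^2-t^2)/(b^2+t^2)^2)) t :=
      HasDerivAt.comp t (mkd _ iE2 (contOn_fE _ hk20 hk21) _ htau2ge htau2lt)
        (hasDerivAt_tau2 ha hab ht0 ht1)
    have hdC := hasDerivAt_Cf ha hab ht0 ht1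
    have hG : HasDerivAt G
        (fJ a b (t^2) * (2*t)
          - b^4 * ( A1 * (fK (k1 a b) (tau1 b t) * ((b^2-1)*(b^2+t^2)/(b^2-t^2)^2))
                  - A2 * (fK (k2 a b) (tau2 b t) * ((1+b^2)*(b^2-t^2)/(b^2+t^2)^2))
                  + (B1 * (fE (k1 a b) (tau1 b t) * ((b^2-1)*(b^2+t^2)/(b^2-t^2)^2))
                   + B2 * (fE (k2 a b) (tau2 b t) * ((1+b^2)*(b^2-t^2)/(b^2+t^2)^2))) )
          + 2*b^8 * (((Pf a b t + t * dPf a b t/2)*(b^4-t^4) + 4*t^4*Pf a b t)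
              / (Real.sqrt (Pf a b t)*(b^4-t^4)^2))) t := by
      rw [hGdef]
      exact (hdJ.sub ((((hdK1.const_mul A1).sub (hdK2.const_mul A2)).add
        ((hdE1.const_mul B1).add (hdE2.const_mul B2))).const_mul (b^4))).add
        (hdC.const_mul (2*b^8))
    have hzero : (fJ a b (t^2) * (2*t)
          - b^4 * ( A1 * (fK (k1 a b) (tau1 b t) * ((b^2-1)*(b^2+t^2)/(b^2-t^2)^2))
                  - A2 * (fK (k2 a b) (tau2 b t) * ((1+b^2)*(b^2-t^2)/(b^2+t^2)^2))
                  + (B1 * (fE (k1 a b) (tau1 b t) * ((b^2-1)*(b^2+t^2)/(b^2-t^2)^2))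
                   + B2 * (fE (k2 a b) (tau2 b t) * ((1+b^2)*(b^2-t^2)/(b^2+t^2)^2))) )
          + 2*b^8 * (((Pf a b t + t * dPf a b t/2)*(b^4-t^4) + 4*t^4*Pf a b t)
              / (Real.sqrt (Pf a b t)*(b^4-t^4)^2))) = 0 := by
      have hX : Real.sqrt (Pf a b t) ≠ 0 :=
        (Real.sqrt_pos.mpr (Pf_pos ha hab ht0 ht1)).ne'
      rw [fJ_sq_eq ha hab ht0 ht1, fK_tau1_eq ha hab ht0 ht1, fE_tau1_eq ha hab ht0 ht1,
        fK_tau2_eq ha hab ht0 ht1, fE_tau2_eq ha hab ht0 ht1, hA1, hA2, hB1, hB2]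
      exact key_identity ha hab ht0 ht1 hX
    rw [hzero] at hG
    exact hG.hasDerivWithinAt
  have hG1 := constant_of_has_deriv_right_zero hcontG hderiv 1 (right_mem_Icc.mpr zero_le_one)
  have hG0 : G 0 = 0 := by
    simp [hGdef, tau1, tau2, Cf, intervalIntegral.integral_same]
  have htau1one : tau1 b 1 = 1 := by
    rw [tau1]
    have : b^2 - 1 ≠ 0 := by nlinarith
    field_simp
  have htau2one : tau2 b 1 = 1 := by
    rw [tau2]
    have : b^2 + 1 ≠ 0 := by nlinarith
    field_simp
    try ring
  have hPf1 : Pf a b 1 = 0 := by rw [Pf]; norm_num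
  have hCf1 : Cf a b 1 = 0 := by rw [Cf, hPf1, Real.sqrt_zero]; ring
  rw [hG0] at hG1
  have hG1' : G 1 = 0 := hG1
  rw [hGdef] at hG1'
  simp only [one_pow, htau1one, htau2one, hCf1] at hG1'
  linarith [hG1']

lemma Gamma3_eq : Real.Gamma 3 = 2 := by
  rw [show (3:ℝ) = ((2:ℕ):ℝ)+1 by norm_num, Real.Gamma_nat_eq_factorial]
  norm_num

lemma Gamma52_eq : Real.Gamma (5/2) = 3/4 * Real.sqrt π := by
  rw [show (5/2:ℝ) = 3/2 + 1 by norm_num, Real.Gamma_add_one (by norm_num),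
    show (3/2:ℝ) = 1/2 + 1 by norm_num, Real.Gamma_add_one (by norm_num),
    Real.Gamma_one_half_eq]
  ring

theorem stmt_15 (a b : ℝ) (ha : 1 < a) (hab : a < b) :
    π = (8/3) * b^4 *
        ((((b^4 - b^2 + 1) / (b^2 - 1)) * ellipticK ((a^2 - 1) * b / (a * (b^2 - 1))) -
            ((b^4 + b^2 + 1) / (1 + b^2)) * ellipticK ((a^2 + 1) * b / (a * (1 + b^2)))) +
          ((1 - b^2) * ellipticE ((a^2 - 1) * b / (a * (b^2 - 1))) +
            (1 + b^2) * ellipticE ((a^2 + 1) * b / (a * (1 + b^2))))) /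
        FD3 (5/2) (1/2) (1/2) (1/2) 3 (a^2/b^2) (1/(a^2*b^2)) (1/b^4) := by
  have ha0 : (0:ℝ) < a := by linarith
  have hb0 : (0:ℝ) < b := by linarith
  have hb1 : (1:ℝ) < b := by linarith
  have ha2 : (1:ℝ) < a^2 := by nlinarith
  have hb2 : (1:ℝ) < b^2 := by nlinarith
  -- identification of elliptic integrals
  have eK1 : ellipticK ((a^2 - 1) * b / (a * (b^2 - 1))) = ∫ τ in (0:ℝ)..1, fK (k1 a b) τ := rfl
  have eK2 : ellipticK ((a^2 + 1) * b / (a * (1 + b^2))) = ∫ τ in (0:ℝ)..1, fK (k2 a b) τ := rfl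
  have eE1 : ellipticE ((a^2 - 1) * b / (a * (b^2 - 1))) = ∫ τ in (0:ℝ)..1, fE (k1 a b) τ := rfl
  have eE2 : ellipticE ((a^2 + 1) * b / (a * (1 + b^2))) = ∫ τ in (0:ℝ)..1, fE (k2 a b) τ := rfl
  -- FD3 in terms of fJ
  have hFD : FD3 (5/2) (1/2) (1/2) (1/2) 3 (a^2/b^2) (1/(a^2*b^2)) (1/b^4)
      = 8/(3*π) * ∫ u in (0:ℝ)..1, fJ a b u := by
    rw [FD3]
    have hint : EqOn (fun u : ℝ => u ^ ((5:ℝ)/2 - 1) * (1-u) ^ ((3:ℝ) - 5/2 - 1) *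
        (1 - a^2/b^2*u) ^ (-(1/2):ℝ) * (1 - 1/(a^2*b^2)*u) ^ (-(1/2):ℝ) *
        (1 - 1/b^4*u) ^ (-(1/2):ℝ)) (fJ a b) (uIcc (0:ℝ) 1) := by
      intro u _
      rw [fJ]
      norm_num
    rw [intervalIntegral.integral_congr hint, Gamma3_eq,
      show (3:ℝ) - 5/2 = 1/2 by norm_num, Real.Gamma_one_half_eq, Gamma52_eq]
    have hpi := Real.pi_pos
    have hsq : Real.sqrt π * Real.sqrt π = π := Real.mul_self_sqrt hpi.le
    have hsp : (0:ℝ) < Real.sqrt π := Real.sqrt_pos.mpr hpi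
    congr 1
    rw [div_eq_div_iff (by positivity) (by positivity)]
    nlinarith [hsq]
  -- positivity of the Euler integral
  have hpos : (0:ℝ) < ∫ u in (0:ℝ)..1, fJ a b u := by
    apply intervalIntegral.intervalIntegral_pos_of_pos_on (integrable_fJ a b ha hab) _ one_pos
    intro u hu
    obtain ⟨hu0, hu1⟩ := hu
    have h1 : (0:ℝ) < 1 - u := by linarith
    have hx : ∀ (x : ℝ), 0 < x → x < 1 → (0:ℝ) < 1 - x*u := by
      intro x hx0 hx1
      nlinarith [mul_pos hx0 h1]
    have hx1 : a^2/b^2 < 1 := by rw [div_lt_one (by positivity)]; nlinarith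
    have hx2 : 1/(a^2*b^2) < 1 := by rw [div_lt_one (by positivity)]; nlinarith
    have hx3 : 1/b^4 < 1 := by
      rw [div_lt_one (by positivity)]; nlinarith
    rw [fJ]
    have r1 : (0:ℝ) < u ^ ((3:ℝ)/2) := Real.rpow_pos_of_pos hu0 _
    have r2 : (0:ℝ) < (1-u) ^ (-(1/2):ℝ) := Real.rpow_pos_of_pos h1 _
    have r3 : (0:ℝ) < (1 - a^2/b^2*u) ^ (-(1/2):ℝ) :=
      Real.rpow_pos_of_pos (hx _ (by positivity) hx1) _
    have r4 : (0:ℝ) < (1 - 1/(a^2*b^2)*u) ^ (-(1/2):ℝ) :=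
      Real.rpow_pos_of_pos (hx _ (by positivity) hx2) _
    have r5 : (0:ℝ) < (1 - 1/b^4*u) ^ (-(1/2):ℝ) :=
      Real.rpow_pos_of_pos (hx _ (by positivity) hx3) _
    positivity
  have hmain := mainId a b ha hab
  rw [eK1, eK2, eE1, eE2, hFD, hmain]
  set S := ((b^4-b^2+1)/(b^2-1) * (∫ τ in (0:ℝ)..1, fK (k1 a b) τ)
             - (b^4+b^2+1)/(1+b^2) * (∫ τ in (0:ℝ)..1, fK (k2 a b) τ))
            + ((1-b^2) * (∫ τ in (0:ℝ)..1, fE (k1 a b) τ)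
             + (1+b^2) * (∫ τ in (0:ℝ)..1, fE (k2 a b) τ)) with hSdef
  have hS : (0:ℝ) < b^4 * S := hmain ▸ hpos
  have hSne : S ≠ 0 := by
    intro h
    rw [h, mul_zero] at hS
    exact lt_irrefl 0 hS
  have hpi := Real.pi_pos
  field_simp
end

section
/- Let a, b be real numbers with 1 < a < b. Then ∫_{1/a}^{a} x⁴/√((x²−a²)(x²−1/a²)(x²−b²)(x²−1/b²)) dx = ( 1/(b(b²−1)) )·( (1−b²+b⁴)·K( b(a²−1)/(a(b²−1)) ) − (b²−1)²·E( b(a²−1)/(a(b²−1)) ) ). (The polynomial (x²−a²)(x²−1/a²)(x²−b²)(x²−1/b²) is nonnegative for x ∈ [1/a, a], so the integrand is real.) -/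
open MeasureTheory Real

lemma aux_intable {c d C : ℝ} (hcd : c ≤ d) (hC : 0 ≤ C) {f : ℝ → ℝ} (hm : Measurable f)
    (hb : ∀ v ∈ Set.Ioo c d, |f v| ≤ C / Real.sqrt (d - v)) :
    IntervalIntegrable f volume c d := by
  have h1 : IntervalIntegrable (fun x : ℝ => x ^ (-(1/2) : ℝ)) volume 0 (d - c) :=
    intervalIntegral.intervalIntegrable_rpow' (by norm_num)
  have h2 : IntervalIntegrable (fun x : ℝ => C * (d - x) ^ (-(1/2) : ℝ)) volume c d := by
    have := ((h1.comp_sub_left d).symm).const_mul C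
    simpa using this
  rw [intervalIntegrable_iff_integrableOn_Ioc_of_le hcd] at h2 ⊢
  rw [integrableOn_Ioc_iff_integrableOn_Ioo] at h2 ⊢
  apply MeasureTheory.Integrable.mono h2 hm.aestronglyMeasurable.restrict
  filter_upwards [ae_restrict_mem measurableSet_Ioo] with v hv
  have hdv : (0:ℝ) < d - v := by simp [Set.mem_Ioo] at hv; linarith [hv.2]
  have hr : (d - v) ^ (-(1/2) : ℝ) = 1 / Real.sqrt (d - v) := by
    rw [Real.rpow_neg hdv.le, Real.sqrt_eq_rpow]; norm_num
  have h3 : ‖C * (d - v) ^ (-(1/2) : ℝ)‖ = C / Real.sqrt (d - v) := by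
    rw [Real.norm_eq_abs, abs_of_nonneg (by positivity), hr]; ring
  rw [Real.norm_eq_abs, h3]
  exact hb v hv

lemma aux_intable' {c d C : ℝ} (hcd : c ≤ d) (hC : 0 ≤ C) {f : ℝ → ℝ} (hm : Measurable f)
    (hb : ∀ v ∈ Set.Ioo c d, |f v| ≤ C / Real.sqrt (v - c)) :
    IntervalIntegrable f volume c d := by
  have h : IntervalIntegrable (fun x => f (-x)) volume (-d) (-c) := by
    apply aux_intable (by linarith) hC (hm.comp measurable_neg)
    intro v hv
    simp only [Set.mem_Ioo] at hv
    have : -v ∈ Set.Ioo c d := by constructor <;> linarith [hv.1, hv.2]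
    simpa [show -c - v = -v - c by ring] using hb (-v) this
  have := (IntervalIntegrable.iff_comp_neg (f := f) (a := d) (b := c)).2 (by simpa using h)
  exact this.symm


set_option maxHeartbeats 2000000 in
theorem stmt_16 (a b : ℝ) (ha : 1 < a) (hab : a < b) :
    (∫ x in (1/a : ℝ)..a,
        x^4 / Real.sqrt ((x^2 - a^2) * (x^2 - 1/a^2) * (x^2 - b^2) * (x^2 - 1/b^2))) =
      (1/(b*(b^2 - 1))) *
        ((1 - b^2 + b^4) * ellipticK (b * (a^2 - 1) / (a * (b^2 - 1))) -
          (b^2 - 1)^2 * ellipticE (b * (a^2 - 1) / (a * (b^2 - 1)))) := by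
  have ha0 : (0:ℝ) < a := by linarith
  have hb1 : (1:ℝ) < b := ha.trans hab
  have hb0 : (0:ℝ) < b := by linarith
  have hia : (0:ℝ) < 1/a := by positivity
  have ha1 : (1:ℝ)/a < 1 := by rw [div_lt_one ha0]; exact ha
  have hle : (1:ℝ)/a ≤ a := by linarith
  set A := a - 1/a with hA
  set B := b - 1/b with hB
  have hA0 : 0 < A := by rw [hA]; linarith
  have hAB : A < B := by
    have h1 : 1/b < 1/a := one_div_lt_one_div_of_lt ha0 hab
    rw [hA, hB]; linarith
  have hB0 : 0 < B := hA0.trans hAB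
  set k := b * (a^2 - 1) / (a * (b^2 - 1)) with hkdef
  have hbsq : (0:ℝ) < b^2 - 1 := by nlinarith
  have hk : k = A / B := by
    rw [hkdef, hA, hB]
    rw [div_eq_div_iff (by positivity) (by
      have : 1/b < 1 := by rw [div_lt_one hb0]; exact hb1
      linarith)]
    field_simp
  have hk0 : 0 < k := by rw [hk]; positivity
  have hk1 : k < 1 := by rw [hk]; exact (div_lt_one hB0).2 hAB
  have hkA : A = B * k := by rw [hk]; field_simp
  clear_value A B k
  -- integrability of elliptic integrands
  have hCk : (0:ℝ) ≤ 1 / Real.sqrt (1 - k^2) := by positivity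
  have hk2 : k^2 < 1 := by nlinarith
  have hsqb : ∀ t ∈ Set.Ioo (0:ℝ) 1,
      Real.sqrt (1 - t) * Real.sqrt (1 - k^2) ≤ Real.sqrt ((1 - t^2) * (1 - k^2 * t^2)) := by
    intro t ht
    rw [← Real.sqrt_mul (by linarith [ht.2] : (0:ℝ) ≤ 1 - t)]
    apply Real.sqrt_le_sqrt
    have ht2 : t^2 ≤ 1 := by nlinarith [ht.1, ht.2]
    have hkt : k^2*t^2 ≤ k^2 := by nlinarith [sq_nonneg k]
    have h5 : 0 ≤ (1-t)*t*(1-k^2*t^2) := by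
      apply mul_nonneg (mul_nonneg (by linarith [ht.2]) ht.1.le) (by linarith)
    have h6 : 0 ≤ (1-t)*(k^2*(1-t^2)) := by
      apply mul_nonneg (by linarith [ht.2]) (mul_nonneg (sq_nonneg k) (by linarith))
    nlinarith [h5, h6]
  have hbig : ∀ t ∈ Set.Ioo (0:ℝ) 1,
      1 / Real.sqrt ((1 - t^2) * (1 - k^2 * t^2)) ≤ (1 / Real.sqrt (1 - k^2)) / Real.sqrt (1 - t) := by
    intro t ht
    have h1 : 0 < Real.sqrt (1 - t) := Real.sqrt_pos.2 (by linarith [ht.2])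
    have h2 : 0 < Real.sqrt (1 - k^2) := Real.sqrt_pos.2 (by linarith)
    have := one_div_le_one_div_of_le (by positivity) (hsqb t ht)
    calc 1 / Real.sqrt ((1 - t^2) * (1 - k^2 * t^2))
        ≤ 1 / (Real.sqrt (1 - t) * Real.sqrt (1 - k^2)) := this
      _ = (1 / Real.sqrt (1 - k^2)) / Real.sqrt (1 - t) := by
          rw [div_div]; ring_nf
  have hKint : IntervalIntegrable
      (fun t => 1 / Real.sqrt ((1 - t^2) * (1 - k^2 * t^2))) volume 0 1 := by
    apply aux_intable zero_le_one hCk (by fun_prop)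
    intro t ht
    rw [abs_of_nonneg (by positivity)]
    exact hbig t ht
  have hTint : IntervalIntegrable
      (fun t => t^2 / Real.sqrt ((1 - t^2) * (1 - k^2 * t^2))) volume 0 1 := by
    apply aux_intable zero_le_one hCk (by fun_prop)
    intro t ht
    rw [abs_of_nonneg (by positivity)]
    have p1 : (0:ℝ) < 1 - t^2 := by nlinarith [ht.1, ht.2]
    have p2 : (0:ℝ) < 1 - k^2*t^2 := by nlinarith [ht.1, ht.2, sq_nonneg k]
    have hd : 0 < Real.sqrt ((1 - t^2) * (1 - k^2 * t^2)) := Real.sqrt_pos.2 (mul_pos p1 p2)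
    calc t^2 / Real.sqrt ((1 - t^2) * (1 - k^2 * t^2))
        ≤ 1 / Real.sqrt ((1 - t^2) * (1 - k^2 * t^2)) := by
          rw [div_le_div_iff_of_pos_right hd]
          nlinarith [ht.1, ht.2]
      _ ≤ (1 / Real.sqrt (1 - k^2)) / Real.sqrt (1 - t) := hbig t ht
  have hEint : IntervalIntegrable
      (fun t => Real.sqrt (1 - k^2 * t^2) / Real.sqrt (1 - t^2)) volume 0 1 := by
    apply aux_intable zero_le_one hCk (by fun_prop)
    intro t ht
    rw [abs_of_nonneg (by positivity)]
    have h1 : 0 < Real.sqrt (1 - t) := Real.sqrt_pos.2 (by linarith [ht.2])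
    have h2pos : 0 < Real.sqrt (1 - k^2) := Real.sqrt_pos.2 (by linarith)
    have h2 : Real.sqrt (1 - k^2) ≤ 1 := by
      have := Real.sqrt_le_sqrt (show (1:ℝ) - k^2 ≤ 1 by nlinarith)
      simpa using this
    have hC1 : (1:ℝ) ≤ 1 / Real.sqrt (1 - k^2) := by
      rw [le_div_iff₀ h2pos]; simpa using h2
    calc Real.sqrt (1 - k^2 * t^2) / Real.sqrt (1 - t^2)
        ≤ 1 / Real.sqrt (1 - t) := by
          apply div_le_div₀ (by norm_num)
          · have : (1:ℝ) - k^2 * t^2 ≤ 1 := by nlinarith [ht.1, ht.2, sq_nonneg k]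
            have := Real.sqrt_le_sqrt this
            simpa using this
          · exact h1
          · exact Real.sqrt_le_sqrt (by nlinarith [ht.1, ht.2])
      _ ≤ (1 / Real.sqrt (1 - k^2)) / Real.sqrt (1 - t) := by
          rw [div_le_div_iff_of_pos_right h1]
          exact hC1
  -- L1 : relation between T, K, E
  have hL1 : k^2 * (∫ t in (0:ℝ)..1, t^2 / Real.sqrt ((1 - t^2) * (1 - k^2 * t^2)))
      = ellipticK k - ellipticE k := by
    rw [ellipticK, ellipticE, ← intervalIntegral.integral_sub hKint hEint,
      ← intervalIntegral.integral_const_mul]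
    apply intervalIntegral.integral_congr
    intro t ht
    rw [Set.uIcc_of_le zero_le_one] at ht
    beta_reduce
    have h1 : (0:ℝ) ≤ 1 - t^2 := by nlinarith [ht.1, ht.2]
    have h2 : (0:ℝ) < 1 - k^2 * t^2 := by nlinarith [ht.1, ht.2]
    have hw : 0 < Real.sqrt (1 - k^2 * t^2) := Real.sqrt_pos.2 h2
    have hw2 : Real.sqrt (1 - k^2 * t^2) ^ 2 = 1 - k^2 * t^2 := Real.sq_sqrt h2.le
    rw [Real.sqrt_mul h1]
    by_cases hu0 : Real.sqrt (1 - t^2) = 0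
    · simp [hu0]
    · have hu : 0 < Real.sqrt (1 - t^2) := (Real.sqrt_nonneg _).lt_of_ne (Ne.symm hu0)
      have hu2 : Real.sqrt (1 - t^2) ^ 2 = 1 - t^2 := Real.sq_sqrt h1
      field_simp
      linear_combination hw2
  have hKfold : (∫ t in (0:ℝ)..1, 1 / Real.sqrt ((1 - t^2) * (1 - k^2 * t^2))) = ellipticK k := by
    rw [ellipticK]
  have hL2 : (∫ v in (0:ℝ)..A, (v^2+1) / Real.sqrt ((A^2 - v^2) * (B^2 - v^2)))
      = (B + 1/B) * ellipticK k - B * ellipticE k := by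
    have hstep : (∫ v in (0:ℝ)..A, (v^2+1) / Real.sqrt ((A^2 - v^2) * (B^2 - v^2)))
        = A • ∫ t in (0:ℝ)..1, ((A*t)^2+1) / Real.sqrt ((A^2 - (A*t)^2) * (B^2 - (A*t)^2)) := by
      have := intervalIntegral.smul_integral_comp_mul_left
        (fun v => (v^2+1) / Real.sqrt ((A^2 - v^2) * (B^2 - v^2))) (a := 0) (b := 1) A
      simp only [mul_zero, mul_one] at this
      exact this.symm
    rw [hstep]
    have hcongr : (∫ t in (0:ℝ)..1, ((A*t)^2+1) / Real.sqrt ((A^2 - (A*t)^2) * (B^2 - (A*t)^2)))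
        = ∫ t in (0:ℝ)..1, ((A/B) * (t^2 / Real.sqrt ((1 - t^2) * (1 - k^2*t^2)))
            + (1/(A*B)) * (1 / Real.sqrt ((1 - t^2) * (1 - k^2*t^2)))) := by
      apply intervalIntegral.integral_congr
      intro t ht
      beta_reduce
      have e3 : (A^2 - (A*t)^2) * (B^2 - (A*t)^2) = (A*B)^2 * ((1 - t^2) * (1 - k^2*t^2)) := by
        rw [hkA]; ring
      rw [e3, Real.sqrt_mul (sq_nonneg _), Real.sqrt_sq (mul_nonneg hA0.le hB0.le)]
      by_cases hS : Real.sqrt ((1 - t^2) * (1 - k^2*t^2)) = 0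
      · simp [hS]
      · field_simp
    rw [hcongr,
      intervalIntegral.integral_add (hTint.const_mul _) (hKint.const_mul _),
      intervalIntegral.integral_const_mul, intervalIntegral.integral_const_mul, hKfold]
    have hEeq : ellipticE k = ellipticK k
        - k^2 * (∫ t in (0:ℝ)..1, t^2 / Real.sqrt ((1 - t^2) * (1 - k^2 * t^2))) := by
      linarith [hL1]
    rw [hEeq, smul_eq_mul, hkA]
    field_simp
    ring
  -- the substitution x ↦ x - 1/x
  set g : ℝ → ℝ := fun v =>
    ((v^2+1)/2 + v*(v^2+3)/(2*Real.sqrt (v^2+4))) / Real.sqrt ((A^2 - v^2) * (B^2 - v^2))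
    with hgdef
  clear_value g
  have hs : MeasurableSet (Set.Ioo ((1:ℝ)/a) a) := measurableSet_Ioo
  have hphi' : ∀ x ∈ Set.Ioo ((1:ℝ)/a) a,
      HasDerivWithinAt (fun x : ℝ => x - 1/x) (1 + (x^2)⁻¹) (Set.Ioo ((1:ℝ)/a) a) x := by
    intro x hx
    have hx0 : 0 < x := hia.trans hx.1
    have h := ((hasDerivAt_id x).sub (hasDerivAt_inv hx0.ne')).hasDerivWithinAt
      (s := Set.Ioo ((1:ℝ)/a) a)
    simpa [one_div, sub_neg_eq_add, Pi.sub_def] using h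
  have hinj : Set.InjOn (fun x : ℝ => x - 1/x) (Set.Ioo ((1:ℝ)/a) a) := by
    have hm : StrictMonoOn (fun x : ℝ => x - 1/x) (Set.Ioo ((1:ℝ)/a) a) := by
      intro x hx y hy hxy
      have hx0 : 0 < x := hia.trans hx.1
      have h := one_div_lt_one_div_of_lt hx0 hxy
      simp only
      linarith
    exact hm.injOn
  have himg : (fun x : ℝ => x - 1/x) '' Set.Ioo ((1:ℝ)/a) a = Set.Ioo (-A) A := by
    apply Set.Subset.antisymm
    · rintro v ⟨x, hx, rfl⟩
      have hx0 : 0 < x := hia.trans hx.1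
      constructor
      · have h1 := one_div_lt_one_div_of_lt hia hx.1
        rw [one_div_one_div] at h1
        simp only [hA]
        linarith [hx.1]
      · have h2 := one_div_lt_one_div_of_lt hx0 hx.2
        simp only [hA]
        linarith [hx.2]
    · have hcont : ContinuousOn (fun x : ℝ => x - 1/x) (Set.Icc ((1:ℝ)/a) a) := by
        apply ContinuousOn.sub continuousOn_id
        exact ContinuousOn.div continuousOn_const continuousOn_id
          (fun x hx => (hia.trans_le hx.1).ne')
      have h2 := intermediate_value_Ioo hle hcont
      rw [one_div_one_div, ← hA] at h2
      have e1 : 1/a - a = -A := by rw [hA]; ring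
      rw [e1] at h2
      exact h2
  have key : (∫ x in Set.Ioo ((1:ℝ)/a) a,
      x^4 / Real.sqrt ((x^2 - a^2) * (x^2 - 1/a^2) * (x^2 - b^2) * (x^2 - 1/b^2)))
      = ∫ v in Set.Ioo (-A) A, g v := by
    rw [← himg, MeasureTheory.integral_image_eq_integral_abs_deriv_smul hs hphi' hinj g]
    apply MeasureTheory.setIntegral_congr_fun hs
    intro x hx
    beta_reduce
    have hx0 : 0 < x := hia.trans hx.1
    have hvA : x - 1/x < A := by
      have h2 := one_div_lt_one_div_of_lt hx0 hx.2
      rw [hA]; linarith [hx.2]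
    have hvA' : -A < x - 1/x := by
      have h1 := one_div_lt_one_div_of_lt hia hx.1
      rw [one_div_one_div] at h1
      rw [hA]; linarith [hx.1]
    have hQ : 0 < (A^2 - (x-1/x)^2) * (B^2 - (x-1/x)^2) := by
      have l1 : (x-1/x)^2 < A^2 := sq_lt_sq' hvA' hvA
      have l2 : (x-1/x)^2 < B^2 := by
        nlinarith [l1, mul_pos (sub_pos.2 hAB) (show (0:ℝ) < B + A by linarith)]
      exact mul_pos (by linarith) (by linarith)
    have hS : 0 < Real.sqrt ((A^2 - (x-1/x)^2) * (B^2 - (x-1/x)^2)) := Real.sqrt_pos.2 hQ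
    have h4 : Real.sqrt ((x-1/x)^2 + 4) = x + 1/x := by
      rw [show (x-1/x)^2 + 4 = (x+1/x)^2 by field_simp; ring]
      exact Real.sqrt_sq (by positivity)
    have hP : (x^2 - a^2) * (x^2 - 1/a^2) * (x^2 - b^2) * (x^2 - 1/b^2)
        = (x^2)^2 * ((A^2 - (x-1/x)^2) * (B^2 - (x-1/x)^2)) := by
      rw [hA, hB]; field_simp; ring
    simp only [hgdef]
    rw [hP, Real.sqrt_mul (sq_nonneg _), Real.sqrt_sq (sq_nonneg x), h4, smul_eq_mul,
      abs_of_pos (show (0:ℝ) < 1 + (x^2)⁻¹ by positivity)]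
    generalize hSg : Real.sqrt ((A^2 - (x-1/x)^2) * (B^2 - (x-1/x)^2)) = S at hS
    have hxx : (0:ℝ) < x + 1/x := by positivity
    field_simp
    ring
  -- integrability of g and symmetrization
  have hgmeas : Measurable g := by rw [hgdef]; fun_prop
  have hnum : ∀ v : ℝ, |v| ≤ A →
      |(v^2+1)/2 + v*(v^2+3)/(2*Real.sqrt (v^2+4))| ≤ (A^2+1)/2 + A*(A^2+3)/4 := by
    intro v hv
    have hvle := abs_le.1 hv
    have hv2 : v^2 ≤ A^2 := sq_le_sq' hvle.1 hvle.2
    have hs4 : (2:ℝ) ≤ Real.sqrt (v^2+4) := by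
      nlinarith [Real.sq_sqrt (show (0:ℝ) ≤ v^2+4 by positivity),
        Real.sqrt_nonneg (v^2+4), sq_nonneg v]
    have h1 : |(v^2+1)/2| ≤ (A^2+1)/2 := by
      rw [abs_of_nonneg (by positivity)]; linarith
    have h2 : |v*(v^2+3)/(2*Real.sqrt (v^2+4))| ≤ A*(A^2+3)/4 := by
      rw [abs_div, abs_mul, abs_of_nonneg (by positivity : (0:ℝ) ≤ 2*Real.sqrt (v^2+4)),
        abs_of_nonneg (by positivity : (0:ℝ) ≤ v^2+3)]
      apply div_le_div₀ (mul_nonneg hA0.le (by positivity))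
      · apply mul_le_mul hv (by nlinarith) (by positivity) (le_trans (abs_nonneg v) hv)
      · norm_num
      · linarith
    calc |(v^2+1)/2 + v*(v^2+3)/(2*Real.sqrt (v^2+4))|
        ≤ |(v^2+1)/2| + |v*(v^2+3)/(2*Real.sqrt (v^2+4))| := abs_add_le _ _
      _ ≤ (A^2+1)/2 + A*(A^2+3)/4 := add_le_add h1 h2
  have hB2A2 : (0:ℝ) < B^2 - A^2 := by
    nlinarith [mul_pos (sub_pos.2 hAB) (show (0:ℝ) < B + A by linarith)]
  have hc2 : 0 < Real.sqrt (A*(B^2 - A^2)) := Real.sqrt_pos.2 (mul_pos hA0 hB2A2)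
  have hCg : (0:ℝ) ≤ ((A^2+1)/2 + A*(A^2+3)/4) / Real.sqrt (A*(B^2-A^2)) := by
    apply div_nonneg _ (Real.sqrt_nonneg _)
    have := mul_nonneg hA0.le (show (0:ℝ) ≤ A^2+3 by positivity)
    nlinarith [sq_nonneg A]
  have hgint_r : IntervalIntegrable g volume 0 A := by
    apply aux_intable hA0.le hCg hgmeas
    intro v hv
    clear key hL1 hL2 hKfold hKint hTint hEint hsqb hbig hphi' hinj himg hgmeas
    have hva : |v| ≤ A := by rw [abs_of_nonneg hv.1.le]; exact hv.2.le
    have hAv : 0 < Real.sqrt (A - v) := Real.sqrt_pos.2 (by linarith [hv.2])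
    have hlow : Real.sqrt (A - v) * Real.sqrt (A*(B^2-A^2)) ≤
        Real.sqrt ((A^2-v^2)*(B^2-v^2)) := by
      rw [← Real.sqrt_mul (by linarith [hv.2] : (0:ℝ) ≤ A - v)]
      apply Real.sqrt_le_sqrt
      have t1 : (0:ℝ) ≤ A - v := by linarith [hv.2]
      have t3 : B^2 - A^2 ≤ B^2 - v^2 := by
        have := pow_le_pow_left₀ hv.1.le hv.2.le 2
        linarith
      calc (A-v)*(A*(B^2-A^2)) = ((A-v)*A)*(B^2-A^2) := by ring
        _ ≤ ((A-v)*(A+v))*(B^2-v^2) := by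
            apply mul_le_mul (mul_le_mul_of_nonneg_left (by linarith [hv.1] : A ≤ A + v) t1)
              t3 hB2A2.le (mul_nonneg t1 (by linarith [hv.1]))
        _ = (A^2-v^2)*(B^2-v^2) := by ring
    have hpos : 0 < Real.sqrt (A - v) * Real.sqrt (A*(B^2-A^2)) := mul_pos hAv hc2
    rw [hgdef]
    beta_reduce
    rw [abs_div, abs_of_nonneg (Real.sqrt_nonneg _)]
    calc |(v^2+1)/2 + v*(v^2+3)/(2*Real.sqrt (v^2+4))| / Real.sqrt ((A^2-v^2)*(B^2-v^2))
        ≤ |(v^2+1)/2 + v*(v^2+3)/(2*Real.sqrt (v^2+4))| /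
            (Real.sqrt (A - v) * Real.sqrt (A*(B^2-A^2))) :=
          div_le_div₀ (abs_nonneg _) le_rfl hpos hlow
      _ ≤ ((A^2+1)/2 + A*(A^2+3)/4) / (Real.sqrt (A - v) * Real.sqrt (A*(B^2-A^2))) := by
          rw [div_le_div_iff_of_pos_right hpos]; exact hnum v hva
      _ = (((A^2+1)/2 + A*(A^2+3)/4) / Real.sqrt (A*(B^2-A^2))) / Real.sqrt (A - v) := by
          rw [div_div, mul_comm (Real.sqrt (A*(B^2-A^2)))]
  have hgint_l : IntervalIntegrable g volume (-A) 0 := by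
    apply aux_intable' (by linarith) hCg hgmeas
    intro v hv
    clear key hL1 hL2 hKfold hKint hTint hEint hsqb hbig hphi' hinj himg hgmeas
    have hva : |v| ≤ A := by rw [abs_of_nonpos hv.2.le]; linarith [hv.1]
    have hAv : 0 < Real.sqrt (v - -A) := Real.sqrt_pos.2 (by linarith [hv.1])
    have hlow : Real.sqrt (v - -A) * Real.sqrt (A*(B^2-A^2)) ≤
        Real.sqrt ((A^2-v^2)*(B^2-v^2)) := by
      rw [← Real.sqrt_mul (by linarith [hv.1] : (0:ℝ) ≤ v - -A)]
      apply Real.sqrt_le_sqrt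
      have t1 : (0:ℝ) ≤ A + v := by linarith [hv.1]
      have t3 : B^2 - A^2 ≤ B^2 - v^2 := by
        have h1 : v^2 ≤ A^2 := by
          nlinarith [mul_pos (show (0:ℝ) < A + v by linarith [hv.1])
            (show (0:ℝ) < A - v by linarith [hv.2])]
        linarith
      calc (v - -A)*(A*(B^2-A^2)) = ((A+v)*A)*(B^2-A^2) := by ring
        _ ≤ ((A+v)*(A-v))*(B^2-v^2) := by
            apply mul_le_mul (mul_le_mul_of_nonneg_left (by linarith [hv.2] : A ≤ A - v) t1)
              t3 hB2A2.le (mul_nonneg t1 (by linarith [hv.2]))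
        _ = (A^2-v^2)*(B^2-v^2) := by ring
    have hpos : 0 < Real.sqrt (v - -A) * Real.sqrt (A*(B^2-A^2)) := mul_pos hAv hc2
    rw [hgdef]
    beta_reduce
    rw [abs_div, abs_of_nonneg (Real.sqrt_nonneg _)]
    calc |(v^2+1)/2 + v*(v^2+3)/(2*Real.sqrt (v^2+4))| / Real.sqrt ((A^2-v^2)*(B^2-v^2))
        ≤ |(v^2+1)/2 + v*(v^2+3)/(2*Real.sqrt (v^2+4))| /
            (Real.sqrt (v - -A) * Real.sqrt (A*(B^2-A^2))) :=
          div_le_div₀ (abs_nonneg _) le_rfl hpos hlow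
      _ ≤ ((A^2+1)/2 + A*(A^2+3)/4) / (Real.sqrt (v - -A) * Real.sqrt (A*(B^2-A^2))) := by
          rw [div_le_div_iff_of_pos_right hpos]; exact hnum v hva
      _ = (((A^2+1)/2 + A*(A^2+3)/4) / Real.sqrt (A*(B^2-A^2))) / Real.sqrt (v - -A) := by
          rw [div_div, mul_comm (Real.sqrt (A*(B^2-A^2)))]
  have hgneg : IntervalIntegrable (fun v => g (-v)) volume 0 A := by
    have h := (IntervalIntegrable.iff_comp_neg (f := g) (a := (0:ℝ)) (b := -A)).1 hgint_l.symm
    simpa using h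
  have hsym : (∫ v in (-A:ℝ)..A, g v)
      = ∫ v in (0:ℝ)..A, (v^2+1)/Real.sqrt ((A^2-v^2)*(B^2-v^2)) := by
    have hsplit : (∫ v in (-A:ℝ)..A, g v)
        = (∫ v in (-A:ℝ)..0, g v) + ∫ v in (0:ℝ)..A, g v :=
      (intervalIntegral.integral_add_adjacent_intervals hgint_l hgint_r).symm
    have hneg : (∫ v in (-A:ℝ)..0, g v) = ∫ v in (0:ℝ)..A, g (-v) := by
      have h := intervalIntegral.integral_comp_neg (a := (0:ℝ)) (b := A) g
      simpa using h.symm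
    rw [hsplit, hneg, ← intervalIntegral.integral_add hgneg hgint_r]
    apply intervalIntegral.integral_congr
    intro v hv
    beta_reduce
    simp only [hgdef, neg_sq]
    rw [← add_div]
    congr 1
    ring
  -- put everything together
  rw [intervalIntegral.integral_of_le hle, MeasureTheory.integral_Ioc_eq_integral_Ioo, key,
    ← MeasureTheory.integral_Ioc_eq_integral_Ioo,
    ← intervalIntegral.integral_of_le (show -A ≤ A by linarith), hsym, hL2]
  have h1b : b - 1/b ≠ 0 := by
    have h5 : 1/b < 1 := by rw [div_lt_one hb0]; exact hb1
    intro h; nlinarith [h5]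
  have h2b : b^2 - 1 ≠ 0 := hbsq.ne'
  have h3b : b ≠ 0 := hb0.ne'
  have h4b : (-1 : ℝ) + b^2 ≠ 0 := by intro h; apply h2b; linarith
  have e : b - 1/b = (b^2-1)/b := by field_simp
  have c1 : B + 1/B = (1 - b^2 + b^4)/(b*(b^2-1)) := by
    rw [hB, e, one_div_div, div_add_div _ _ h3b h2b]
    congr 1
    ring
  have c2 : B = (b^2-1)^2/(b*(b^2-1)) := by
    rw [hB, e, div_eq_div_iff h3b (mul_ne_zero h3b h2b)]
    ring
  rw [c1, c2]
  ring
end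

section
/- Let a, b, c, d be real numbers with 0 < a < b < c < d, and let s > −1 be real. Then ∫₀^{a} x^s/√((x²−a²)(x²−b²)(x²−c²)(x²−d²)) dx = ( a^s/(2bcd) )·( √π · Γ((s+1)/2)/Γ((s+2)/2) )·F_D^(3)( (1+s)/2; 1/2,1/2,1/2; (s+2)/2 | a²/b², a²/c², a²/d² ). (The polynomial (x²−a²)(x²−b²)(x²−c²)(x²−d²) is nonnegative for x ∈ [0,a], so the integrand is real.) -/
open MeasureTheory Real

set_option maxHeartbeats 1000000 in
theorem stmt_18 (a b c d s : ℝ) (ha : 0 < a) (hab : a < b) (hbc : b < c) (hcd : c < d)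
    (hs : -1 < s) :
    (∫ x in (0:ℝ)..a,
        x ^ s / Real.sqrt ((x^2 - a^2) * (x^2 - b^2) * (x^2 - c^2) * (x^2 - d^2))) =
      (a ^ s / (2*b*c*d)) * (Real.sqrt π * Real.Gamma ((s+1)/2) / Real.Gamma ((s+2)/2)) *
        FD3 ((1+s)/2) (1/2) (1/2) (1/2) ((s+2)/2) (a^2/b^2) (a^2/c^2) (a^2/d^2) := by
  have hb : 0 < b := ha.trans hab
  have hc : 0 < c := hb.trans hbc
  have hd : 0 < d := hc.trans hcd
  unfold FD3
  set I := ∫ u in (0:ℝ)..1,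
      u ^ ((1+s)/2 - 1) * (1 - u) ^ ((s+2)/2 - (1+s)/2 - 1) *
        (1 - a^2/b^2 * u) ^ (-(1/2:ℝ)) * (1 - a^2/c^2 * u) ^ (-(1/2:ℝ)) *
        (1 - a^2/d^2 * u) ^ (-(1/2:ℝ)) with hI
  have hG : (Real.sqrt π * Real.Gamma ((s+1)/2) / Real.Gamma ((s+2)/2)) *
      (Real.Gamma ((s+2)/2) / (Real.Gamma ((1+s)/2) * Real.Gamma ((s+2)/2 - (1+s)/2))) = 1 := by
    rw [show (s+2)/2 - (1+s)/2 = (1:ℝ)/2 by ring, Real.Gamma_one_half_eq,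
      show (1+s)/2 = (s+1)/2 by ring]
    have h1 : 0 < Real.Gamma ((s+1)/2) := Real.Gamma_pos_of_pos (by linarith)
    have h2 : 0 < Real.Gamma ((s+2)/2) := Real.Gamma_pos_of_pos (by linarith)
    have hπ : 0 < Real.sqrt π := Real.sqrt_pos.mpr Real.pi_pos
    field_simp
  have main : (∫ x in (0:ℝ)..a,
      x ^ s / Real.sqrt ((x^2 - a^2) * (x^2 - b^2) * (x^2 - c^2) * (x^2 - d^2))) =
      a ^ s / (2*b*c*d) * I := by
    have himage : (fun u : ℝ => a * Real.sqrt u) '' Set.Ioo 0 1 = Set.Ioo 0 a := by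
      ext x
      constructor
      · rintro ⟨u, ⟨hu0, hu1⟩, rfl⟩
        have hsu : 0 < Real.sqrt u := Real.sqrt_pos.mpr hu0
        have hsu1 : Real.sqrt u < 1 := by
          rw [show (1:ℝ) = Real.sqrt 1 by simp]
          exact Real.sqrt_lt_sqrt hu0.le hu1
        refine ⟨?_, ?_⟩
        · show 0 < a * Real.sqrt u
          positivity
        · show a * Real.sqrt u < a
          nlinarith
      · rintro ⟨hx0, hxa⟩
        refine ⟨(x/a)^2, ⟨by positivity, ?_⟩, ?_⟩
        · have : x/a < 1 := (div_lt_one ha).mpr hxa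
          nlinarith [div_pos hx0 ha]
        · show a * Real.sqrt ((x/a)^2) = x
          rw [Real.sqrt_sq (by positivity)]
          field_simp
    have hinj : Set.InjOn (fun u : ℝ => a * Real.sqrt u) (Set.Ioo 0 1) := by
      intro u hu v hv huv
      simp only at huv
      have h := mul_left_cancel₀ ha.ne' huv
      have := congrArg (fun t => t^2) h
      simpa [Real.sq_sqrt hu.1.le, Real.sq_sqrt hv.1.le] using this
    have hderiv : ∀ u ∈ Set.Ioo (0:ℝ) 1,
        HasDerivWithinAt (fun u : ℝ => a * Real.sqrt u) (a * (1 / (2 * Real.sqrt u)))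
          (Set.Ioo 0 1) u := by
      intro u hu
      exact ((Real.hasDerivAt_sqrt hu.1.ne').const_mul a).hasDerivWithinAt
    have hIset : a ^ s / (2*b*c*d) * I = ∫ u in Set.Ioo (0:ℝ) 1, a ^ s / (2*b*c*d) *
        (u ^ ((1+s)/2 - 1) * (1 - u) ^ ((s+2)/2 - (1+s)/2 - 1) *
          (1 - a^2/b^2 * u) ^ (-(1/2:ℝ)) * (1 - a^2/c^2 * u) ^ (-(1/2:ℝ)) *
          (1 - a^2/d^2 * u) ^ (-(1/2:ℝ))) := by
      rw [hI, intervalIntegral.integral_of_le zero_le_one,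
        MeasureTheory.integral_Ioc_eq_integral_Ioo, ← MeasureTheory.integral_const_mul]
    rw [intervalIntegral.integral_of_le ha.le, MeasureTheory.integral_Ioc_eq_integral_Ioo,
      ← himage,
      MeasureTheory.integral_image_eq_integral_abs_deriv_smul measurableSet_Ioo hderiv hinj,
      hIset]
    refine MeasureTheory.setIntegral_congr_fun measurableSet_Ioo fun u hu => ?_
    obtain ⟨hu0, hu1⟩ := hu
    have hsu : 0 < Real.sqrt u := Real.sqrt_pos.mpr hu0
    have h1u : 0 < 1 - u := by linarith
    have hxb : 0 < 1 - a^2/b^2 * u := by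
      have h1 : a^2/b^2 < 1 := (div_lt_one (by positivity)).mpr (by nlinarith)
      nlinarith [div_pos (mul_pos ha ha) (mul_pos hb hb)]
    have hxc : 0 < 1 - a^2/c^2 * u := by
      have h1 : a^2/c^2 < 1 := (div_lt_one (by positivity)).mpr (by nlinarith)
      nlinarith [div_pos (mul_pos ha ha) (mul_pos hc hc)]
    have hxd : 0 < 1 - a^2/d^2 * u := by
      have h1 : a^2/d^2 < 1 := (div_lt_one (by positivity)).mpr (by nlinarith)
      nlinarith [div_pos (mul_pos ha ha) (mul_pos hd hd)]
    simp only [smul_eq_mul]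
    have hsq : (a * Real.sqrt u)^2 = a^2 * u := by
      rw [mul_pow, Real.sq_sqrt hu0.le]
    have hD : ((a * Real.sqrt u)^2 - a^2) * ((a * Real.sqrt u)^2 - b^2) *
        ((a * Real.sqrt u)^2 - c^2) * ((a * Real.sqrt u)^2 - d^2)
        = (a^2 * (1 - u)) * ((b^2 * (1 - a^2/b^2 * u)) *
          ((c^2 * (1 - a^2/c^2 * u)) * (d^2 * (1 - a^2/d^2 * u)))) := by
      rw [hsq]; field_simp; ring
    have hsqrtD : Real.sqrt (((a * Real.sqrt u)^2 - a^2) * ((a * Real.sqrt u)^2 - b^2) *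
        ((a * Real.sqrt u)^2 - c^2) * ((a * Real.sqrt u)^2 - d^2))
        = (a * Real.sqrt (1-u)) * ((b * Real.sqrt (1 - a^2/b^2 * u)) *
          ((c * Real.sqrt (1 - a^2/c^2 * u)) * (d * Real.sqrt (1 - a^2/d^2 * u)))) := by
      rw [hD,
        Real.sqrt_mul (by positivity : (0:ℝ) ≤ a^2 * (1-u)),
        Real.sqrt_mul (by positivity : (0:ℝ) ≤ b^2 * (1 - a^2/b^2 * u)),
        Real.sqrt_mul (by positivity : (0:ℝ) ≤ c^2 * (1 - a^2/c^2 * u)),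
        Real.sqrt_mul (sq_nonneg a), Real.sqrt_mul (sq_nonneg b),
        Real.sqrt_mul (sq_nonneg c), Real.sqrt_mul (sq_nonneg d),
        Real.sqrt_sq ha.le, Real.sqrt_sq hb.le, Real.sqrt_sq hc.le, Real.sqrt_sq hd.le]
    have hpow : (a * Real.sqrt u) ^ s = a ^ s * u ^ (s/2) := by
      rw [Real.mul_rpow ha.le (Real.sqrt_nonneg u), Real.sqrt_eq_rpow,
        ← Real.rpow_mul hu0.le, show (1:ℝ)/2 * s = s/2 by ring]
    rw [hsqrtD, hpow, abs_of_pos (by positivity)]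
    rw [show (1+s)/2 - 1 = s/2 - 1/2 by ring, Real.rpow_sub hu0,
      show (s+2)/2 - (1+s)/2 - 1 = -(1/2:ℝ) by ring]
    rw [Real.rpow_neg h1u.le, Real.rpow_neg hxb.le, Real.rpow_neg hxc.le,
      Real.rpow_neg hxd.le, ← Real.sqrt_eq_rpow, ← Real.sqrt_eq_rpow,
      ← Real.sqrt_eq_rpow, ← Real.sqrt_eq_rpow, ← Real.sqrt_eq_rpow]
    have hsu' : Real.sqrt u ≠ 0 := hsu.ne'
    have h1u' : Real.sqrt (1-u) ≠ 0 := by positivity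
    have hxb' : Real.sqrt (1 - a^2/b^2 * u) ≠ 0 := by positivity
    have hxc' : Real.sqrt (1 - a^2/c^2 * u) ≠ 0 := by positivity
    have hxd' : Real.sqrt (1 - a^2/d^2 * u) ≠ 0 := by positivity
    have key : ∀ P Q X Y Z : ℝ, P ≠ 0 → Q ≠ 0 → X ≠ 0 → Y ≠ 0 → Z ≠ 0 →
        a * (1 / (2 * P)) * (a ^ s * u ^ (s/2) / (a * Q * (b * X * (c * Y * (d * Z)))))
          = a ^ s / (2*b*c*d) * (u ^ (s/2) / P * Q⁻¹ * X⁻¹ * Y⁻¹ * Z⁻¹) := by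
      intro P Q X Y Z hP hQ hX hY hZ
      have ha' : a ≠ 0 := ha.ne'
      have hb' : b ≠ 0 := hb.ne'
      have hc' : c ≠ 0 := hc.ne'
      have hd' : d ≠ 0 := hd.ne'
      field_simp
    exact key _ _ _ _ _ hsu' h1u' hxb' hxc' hxd'
  rw [main]
  have hmul : ∀ (P G1 G2 J : ℝ), G1 * G2 = 1 → P * J = P * G1 * (G2 * J) := by
    intro P G1 G2 J h
    rw [mul_assoc, ← mul_assoc G1 G2 J, h, one_mul]
  exact hmul _ _ _ _ hG
end

section
/- Let a, b be complex numbers that are not real, and let s be a real number with −1 < s < 3 and s ≠ 1. Then ∫₀^{∞} x^s/√((x²−a²)(x²−ā²)(x²−b²)(x²−b̄²)) dx = ( π(1−s)/(4 cos(πs/2)) )·F_D^(4)( (3−s)/2; 1/2,1/2,1/2,1/2; 2 | 1+a², 1+ā², 1+b², 1+b̄² ), where ā, b̄ denote complex conjugates. (For real x, (x²−a²)(x²−ā²) = |x²−a²|² > 0 and (x²−b²)(x²−b̄²) = |x²−b²|² > 0, so the integrand is a positive real function; the Lauricella value is real since its arguments come in complex conjugate pairs.) -/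
open MeasureTheory Real

section AuxStmt19

lemma l_ne (a : ℂ) (ha : a.im ≠ 0) (x : ℝ) : (x:ℂ)^2 - a^2 ≠ 0 := by
  intro h
  rw [sub_eq_zero] at h
  have him : (a^2).im = 0 := by rw [← h]; simp [pow_two]
  have hre : (a^2).re = x^2 := by rw [← h]; simp [pow_two]
  rw [pow_two, Complex.mul_im] at him
  rw [pow_two, Complex.mul_re] at hre
  have hre0 : a.re = 0 := by
    by_contra h0
    exact mul_ne_zero h0 ha (by linarith)
  rw [hre0] at hre
  nlinarith [mul_self_pos.2 ha, sq_nonneg x]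

lemma l_conjfac (a : ℂ) (x : ℝ) :
    (x:ℂ)^2 - (starRingEnd ℂ a)^2 = starRingEnd ℂ ((x:ℂ)^2 - a^2) := by
  simp [map_sub, map_pow, Complex.conj_ofReal]

lemma l_mulconj (z : ℂ) : z * starRingEnd ℂ z = (((norm z)^2 : ℝ) : ℂ) := by
  rw [Complex.mul_conj, Complex.sq_norm]

lemma l_slit (a : ℂ) (ha : a.im ≠ 0) {u : ℝ} (hu0 : 0 < u) (hu1 : u < 1) :
    (1 - (1+a^2)*(u:ℂ)).im ≠ 0 ∨ 0 < (1 - (1+a^2)*(u:ℂ)).re := by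
  by_cases hre : a.re = 0
  · right
    have h1 : (1 - (1+a^2)*(u:ℂ)).re = 1 - (1 + (a.re*a.re - a.im*a.im))*u := by
      simp [pow_two, Complex.mul_re, Complex.add_re, Complex.add_im]
    rw [h1, hre]
    nlinarith [mul_pos (mul_self_pos.2 ha) hu0]
  · left
    have h1 : (1 - (1+a^2)*(u:ℂ)).im = -((a.re*a.im + a.im*a.re)*u) := by
      simp [pow_two, Complex.mul_im, Complex.add_re, Complex.add_im]
    rw [h1]
    simp only [neg_ne_zero]
    refine mul_ne_zero (fun h => ?_) (ne_of_gt hu0)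
    exact mul_ne_zero hre ha (by linarith)

lemma l_nz (a : ℂ) (ha : a.im ≠ 0) {u : ℝ} (hu0 : 0 < u) (hu1 : u < 1) :
    1 - (1+a^2)*(u:ℂ) ≠ 0 := by
  rcases l_slit a ha hu0 hu1 with h | h
  · exact fun h0 => h (by rw [h0]; simp)
  · exact fun h0 => by rw [h0] at h; simp at h

lemma pair_cpow (z : ℂ) (hz : z.im ≠ 0 ∨ 0 < z.re) :
    z ^ (-(1/2:ℂ)) * (starRingEnd ℂ z) ^ (-(1/2:ℂ)) = (((norm z)⁻¹ : ℝ) : ℂ) := by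
  have hz0 : z ≠ 0 := by
    rcases hz with h | h
    · exact fun h0 => h (by rw [h0]; simp)
    · exact fun h0 => by rw [h0] at h; simp at h
  have harg : z.arg ≠ π := by
    rw [Ne, Complex.arg_eq_pi_iff]
    rintro ⟨h1, h2⟩
    rcases hz with h | h
    · exact h h2
    · linarith
  have hc2 : (starRingEnd ℂ) (-(1/2:ℂ)) = -(1/2:ℂ) := by
    simp; rw [show ((2:ℂ)) = ((2:ℝ):ℂ) by norm_num, Complex.conj_ofReal]
  have hconj : (starRingEnd ℂ z) ^ (-(1/2:ℂ)) = starRingEnd ℂ (z ^ (-(1/2:ℂ))) := by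
    rw [Complex.conj_cpow _ _ harg, hc2]
  rw [hconj, Complex.mul_conj, Complex.normSq_eq_norm_sq]
  congr 1
  have h12 : (-(1/2:ℂ)) = ((-(1/2):ℝ):ℂ) := by norm_num
  rw [h12, Complex.norm_cpow_real]
  rw [← Real.rpow_natCast (norm z ^ (-(1/2):ℝ)) 2,
    ← Real.rpow_mul (norm_nonneg z)]
  norm_num [Real.rpow_neg_one]

noncomputable def Fmap (u : ℝ) : ℝ := Real.sqrt ((1-u)/u)
noncomputable def Fmap' (u : ℝ) : ℝ := ((-1*u - (1-u)*1)/u^2) / (2*Real.sqrt ((1-u)/u))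

lemma gpos {u : ℝ} (hu0 : 0 < u) (hu1 : u < 1) : 0 < (1-u)/u :=
  div_pos (by linarith) hu0

lemma Fmap_deriv {u : ℝ} (hu0 : 0 < u) (hu1 : u < 1) :
    HasDerivAt Fmap (Fmap' u) u := by
  have hg : HasDerivAt (fun u : ℝ => (1-u)/u) ((-1*u - (1-u)*1)/u^2) u :=
    ((hasDerivAt_id u).const_sub 1).div (hasDerivAt_id u) (ne_of_gt hu0)
  exact hg.sqrt (ne_of_gt (gpos hu0 hu1))

lemma Fmap_inj : Set.InjOn Fmap (Set.Ioo (0:ℝ) 1) := by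
  have h : StrictAntiOn Fmap (Set.Ioo (0:ℝ) 1) := by
    intro u hu v hv huv
    apply Real.sqrt_lt_sqrt (le_of_lt (gpos hv.1 hv.2))
    rw [div_lt_div_iff₀ hv.1 hu.1]
    nlinarith
  exact h.injOn

lemma Fmap_image : Fmap '' (Set.Ioo (0:ℝ) 1) = Set.Ioi (0:ℝ) := by
  ext x
  constructor
  · rintro ⟨u, hu, rfl⟩
    exact Real.sqrt_pos.2 (gpos hu.1 hu.2)
  · intro hx
    have hx' : (0:ℝ) < x := hx
    have h1 : (0:ℝ) < 1 + x^2 := by positivity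
    refine ⟨(1+x^2)⁻¹, ⟨by positivity, ?_⟩, ?_⟩
    · rw [inv_lt_one_iff₀]; right; nlinarith
    · show Real.sqrt _ = x
      have h2 : (1 - (1+x^2)⁻¹)/(1+x^2)⁻¹ = x^2 := by field_simp; ring
      rw [h2, Real.sqrt_sq hx'.le]

lemma abs_fact (a : ℂ) {u : ℝ} (hu0 : 0 < u) (hu1 : u < 1) :
    norm (((Fmap u : ℝ):ℂ)^2 - a^2) = norm (1-(1+a^2)*(u:ℂ)) / u := by
  have h1 : (((Fmap u : ℝ):ℂ))^2 = (((1-u)/u : ℝ):ℂ) := by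
    rw [← Complex.ofReal_pow]
    congr 1
    exact Real.sq_sqrt (gpos hu0 hu1).le
  have hu : (u:ℂ) ≠ 0 := Complex.ofReal_ne_zero.2 (ne_of_gt hu0)
  have h2 : (((1-u)/u : ℝ):ℂ) - a^2 = (1-(1+a^2)*(u:ℂ))/(u:ℂ) := by
    push_cast
    field_simp
    ring
  rw [h1, h2, norm_div, Complex.norm_real, Real.norm_eq_abs, abs_of_pos hu0]

lemma gamma_calc (s : ℝ) (hs : s ≠ 1) :
    Real.Gamma ((3-s)/2) * Real.Gamma ((1+s)/2) = ((1-s)/2) * (π / Real.cos (π*s/2)) := by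
  have h0 : (1-s)/2 ≠ 0 := by
    intro h
    apply hs
    field_simp at h
    linarith
  rw [show (3-s)/2 = (1-s)/2 + 1 by ring, Real.Gamma_add_one h0,
    show (1+s)/2 = 1 - (1-s)/2 by ring, mul_assoc, Real.Gamma_mul_Gamma_one_sub]
  congr 1
  rw [show π*((1-s)/2) = π/2 - π*s/2 by ring, Real.sin_pi_div_two_sub]

lemma cos_ne (s : ℝ) (hs1 : -1 < s) (hs3 : s < 3) (hs : s ≠ 1) :
    Real.cos (π*s/2) ≠ 0 := by
  rcases lt_or_gt_of_ne hs with h | h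
  · exact ne_of_gt (Real.cos_pos_of_mem_Ioo
      ⟨by nlinarith [pi_pos], by nlinarith [pi_pos]⟩)
  · exact ne_of_lt (Real.cos_neg_of_pi_div_two_lt_of_lt
      (by nlinarith [pi_pos]) (by nlinarith [pi_pos]))

lemma lhs_integrand (a b : ℂ) (ha : a.im ≠ 0) (hb : b.im ≠ 0) (s : ℝ) {x : ℝ} (hx : 0 < x) :
    (x:ℂ) ^ (s:ℂ) /
      (((x:ℂ)^2 - a^2) * ((x:ℂ)^2 - (starRingEnd ℂ a)^2) *
        ((x:ℂ)^2 - b^2) * ((x:ℂ)^2 - (starRingEnd ℂ b)^2)) ^ ((1:ℂ)/2)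
    = ((x ^ s / (norm ((x:ℂ)^2-a^2) * norm ((x:ℂ)^2-b^2)) : ℝ) : ℂ) := by
  set p := norm ((x:ℂ)^2-a^2) with hp'
  set q := norm ((x:ℂ)^2-b^2) with hq'
  have hp : 0 < p := norm_pos_iff.mpr (l_ne a ha x)
  have hq : 0 < q := norm_pos_iff.mpr (l_ne b hb x)
  have hD : ((x:ℂ)^2 - a^2) * ((x:ℂ)^2 - (starRingEnd ℂ a)^2) *
      ((x:ℂ)^2 - b^2) * ((x:ℂ)^2 - (starRingEnd ℂ b)^2) = (((p*q)^2 : ℝ):ℂ) := by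
    rw [show ((x:ℂ)^2 - a^2) * ((x:ℂ)^2 - (starRingEnd ℂ a)^2) *
        ((x:ℂ)^2 - b^2) * ((x:ℂ)^2 - (starRingEnd ℂ b)^2)
      = (((x:ℂ)^2 - a^2) * ((x:ℂ)^2 - (starRingEnd ℂ a)^2)) *
        (((x:ℂ)^2 - b^2) * ((x:ℂ)^2 - (starRingEnd ℂ b)^2)) from by ring,
      l_conjfac a x, l_conjfac b x, l_mulconj, l_mulconj]
    push_cast
    ring
  have hD2 : (((p*q)^2:ℝ):ℂ) ^ ((1:ℂ)/2) = ((p*q : ℝ):ℂ) := by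
    rw [show ((1:ℂ)/2) = (((1/2:ℝ)):ℂ) by norm_num, ← Complex.ofReal_cpow (by positivity),
      ← Real.sqrt_eq_rpow, Real.sqrt_sq (by positivity)]
  have hnum : (x:ℂ) ^ (s:ℂ) = ((x^s : ℝ):ℂ) := (Complex.ofReal_cpow hx.le s).symm
  rw [hD, hD2, hnum, ← Complex.ofReal_div]

lemma rhs_integrand (a b : ℂ) (ha : a.im ≠ 0) (hb : b.im ≠ 0) (s : ℝ)
    {u : ℝ} (hu0 : 0 < u) (hu1 : u < 1) :
    (u:ℂ) ^ ((((3-s)/2:ℝ):ℂ) - 1) * ((1:ℂ) - (u:ℂ)) ^ ((2:ℂ) - (((3-s)/2:ℝ):ℂ) - 1) *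
      (1 - (1+a^2)*(u:ℂ)) ^ (-(1/2:ℂ)) *
      (1 - (1+(starRingEnd ℂ a)^2)*(u:ℂ)) ^ (-(1/2:ℂ)) *
      (1 - (1+b^2)*(u:ℂ)) ^ (-(1/2:ℂ)) *
      (1 - (1+(starRingEnd ℂ b)^2)*(u:ℂ)) ^ (-(1/2:ℂ))
    = ((u ^ ((1-s)/2) * (1-u) ^ ((s-1)/2) * (norm (1-(1+a^2)*(u:ℂ)))⁻¹ *
        (norm (1-(1+b^2)*(u:ℂ)))⁻¹ : ℝ) : ℂ) := by
  have t1 : (u:ℂ) ^ ((((3-s)/2:ℝ):ℂ) - 1) = ((u ^ ((1-s)/2) : ℝ):ℂ) := by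
    rw [show (((3-s)/2:ℝ):ℂ) - 1 = (((1-s)/2:ℝ):ℂ) by push_cast; ring,
      ← Complex.ofReal_cpow hu0.le]
  have t2 : ((1:ℂ) - (u:ℂ)) ^ ((2:ℂ) - (((3-s)/2:ℝ):ℂ) - 1) = (((1-u) ^ ((s-1)/2) : ℝ):ℂ) := by
    rw [show (1:ℂ)-(u:ℂ) = (((1-u:ℝ)):ℂ) by push_cast; ring,
      show (2:ℂ) - (((3-s)/2:ℝ):ℂ) - 1 = (((s-1)/2:ℝ):ℂ) by push_cast; ring,
      ← Complex.ofReal_cpow (by linarith)]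
  have hca : 1 - (1+(starRingEnd ℂ a)^2)*(u:ℂ) = starRingEnd ℂ (1 - (1+a^2)*(u:ℂ)) := by
    simp [map_sub, map_mul, map_add, map_pow, Complex.conj_ofReal]
  have hcb : 1 - (1+(starRingEnd ℂ b)^2)*(u:ℂ) = starRingEnd ℂ (1 - (1+b^2)*(u:ℂ)) := by
    simp [map_sub, map_mul, map_add, map_pow, Complex.conj_ofReal]
  have ta : (1 - (1+a^2)*(u:ℂ)) ^ (-(1/2:ℂ)) *
      (1 - (1+(starRingEnd ℂ a)^2)*(u:ℂ)) ^ (-(1/2:ℂ))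
      = (((norm (1-(1+a^2)*(u:ℂ)))⁻¹ : ℝ) : ℂ) := by
    rw [hca]; exact pair_cpow _ (l_slit a ha hu0 hu1)
  have tb : (1 - (1+b^2)*(u:ℂ)) ^ (-(1/2:ℂ)) *
      (1 - (1+(starRingEnd ℂ b)^2)*(u:ℂ)) ^ (-(1/2:ℂ))
      = (((norm (1-(1+b^2)*(u:ℂ)))⁻¹ : ℝ) : ℂ) := by
    rw [hcb]; exact pair_cpow _ (l_slit b hb hu0 hu1)
  calc (u:ℂ) ^ ((((3-s)/2:ℝ):ℂ) - 1) * ((1:ℂ) - (u:ℂ)) ^ ((2:ℂ) - (((3-s)/2:ℝ):ℂ) - 1) *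
      (1 - (1+a^2)*(u:ℂ)) ^ (-(1/2:ℂ)) *
      (1 - (1+(starRingEnd ℂ a)^2)*(u:ℂ)) ^ (-(1/2:ℂ)) *
      (1 - (1+b^2)*(u:ℂ)) ^ (-(1/2:ℂ)) *
      (1 - (1+(starRingEnd ℂ b)^2)*(u:ℂ)) ^ (-(1/2:ℂ))
      = ((u:ℂ) ^ ((((3-s)/2:ℝ):ℂ) - 1)) * (((1:ℂ) - (u:ℂ)) ^ ((2:ℂ) - (((3-s)/2:ℝ):ℂ) - 1)) *
        ((1 - (1+a^2)*(u:ℂ)) ^ (-(1/2:ℂ)) *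
          (1 - (1+(starRingEnd ℂ a)^2)*(u:ℂ)) ^ (-(1/2:ℂ))) *
        ((1 - (1+b^2)*(u:ℂ)) ^ (-(1/2:ℂ)) *
          (1 - (1+(starRingEnd ℂ b)^2)*(u:ℂ)) ^ (-(1/2:ℂ))) := by ring
    _ = _ := by rw [t1, t2, ta, tb]; push_cast; ring

lemma cov_pointwise (a b : ℂ) (ha : a.im ≠ 0) (hb : b.im ≠ 0) (s : ℝ)
    {u : ℝ} (hu0 : 0 < u) (hu1 : u < 1) :
    |Fmap' u| * ((Fmap u) ^ s /
        (norm (((Fmap u : ℝ):ℂ)^2-a^2) * norm (((Fmap u : ℝ):ℂ)^2-b^2)))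
    = (1/2) * (u ^ ((1-s)/2) * (1-u) ^ ((s-1)/2) * (norm (1-(1+a^2)*(u:ℂ)))⁻¹ *
        (norm (1-(1+b^2)*(u:ℂ)))⁻¹) := by
  have hg : 0 < (1-u)/u := gpos hu0 hu1
  have hsg : 0 < Real.sqrt ((1-u)/u) := Real.sqrt_pos.2 hg
  have hAa : 0 < norm (1-(1+a^2)*(u:ℂ)) := norm_pos_iff.mpr (l_nz a ha hu0 hu1)
  have hAb : 0 < norm (1-(1+b^2)*(u:ℂ)) := norm_pos_iff.mpr (l_nz b hb hu0 hu1)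
  rw [abs_fact a hu0 hu1, abs_fact b hu0 hu1]
  have e1 : |Fmap' u| = 1/(2*Real.sqrt ((1-u)/u)*u^2) := by
    rw [show Fmap' u = -(1/(2*Real.sqrt ((1-u)/u)*u^2)) from by
      unfold Fmap'; field_simp; ring]
    rw [abs_neg, abs_of_pos (by positivity)]
  have e5 : Real.sqrt ((1-u)/u) ^ s / Real.sqrt ((1-u)/u)
      = (1-u) ^ ((s-1)/2) * u ^ ((1-s)/2) := by
    rw [show Real.sqrt ((1-u)/u) ^ s / Real.sqrt ((1-u)/u)
        = Real.sqrt ((1-u)/u) ^ s / Real.sqrt ((1-u)/u) ^ (1:ℝ) from by rw [Real.rpow_one],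
      ← Real.rpow_sub hsg, Real.sqrt_eq_rpow, ← Real.rpow_mul hg.le,
      show (1/(2:ℝ))*(s-1) = (s-1)/2 from by ring,
      Real.div_rpow (by linarith : (0:ℝ) ≤ 1-u) hu0.le, div_eq_mul_inv,
      ← Real.rpow_neg hu0.le, show -((s-1)/2) = (1-s)/2 from by ring]
  rw [show Fmap u = Real.sqrt ((1-u)/u) from rfl]
  set sg := Real.sqrt ((1-u)/u) with hsgdef
  set Aa := norm (1-(1+a^2)*(u:ℂ)) with hAadef
  set Ab := norm (1-(1+b^2)*(u:ℂ)) with hAbdef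
  have e6 : sg ^ s = (1-u)^((s-1)/2) * u^((1-s)/2) * sg := (div_eq_iff (ne_of_gt hsg)).1 e5
  rw [e1, e6]
  have hu2 : u ≠ 0 := ne_of_gt hu0
  have hsg' : sg ≠ 0 := ne_of_gt hsg
  have hAa' : Aa ≠ 0 := ne_of_gt hAa
  have hAb' : Ab ≠ 0 := ne_of_gt hAb
  field_simp

end AuxStmt19

theorem stmt_19 (a b : ℂ) (ha : a.im ≠ 0) (hb : b.im ≠ 0) (s : ℝ)
    (hs1 : -1 < s) (hs3 : s < 3) (hs : s ≠ 1) :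
    (∫ x in Set.Ioi (0:ℝ),
        (x : ℂ) ^ (s : ℂ) /
          (((x : ℂ)^2 - a^2) * ((x : ℂ)^2 - (starRingEnd ℂ a)^2) *
            ((x : ℂ)^2 - b^2) * ((x : ℂ)^2 - (starRingEnd ℂ b)^2)) ^ ((1:ℂ)/2)) =
      ((π * (1 - s) / (4 * Real.cos (π * s / 2)) : ℝ) : ℂ) *
        FD4C (((3 - s)/2 : ℝ) : ℂ) (1/2) (1/2) (1/2) (1/2) 2
          (1 + a^2) (1 + (starRingEnd ℂ a)^2) (1 + b^2) (1 + (starRingEnd ℂ b)^2) := by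
  have hL : (∫ x in Set.Ioi (0:ℝ),
      (x : ℂ) ^ (s : ℂ) /
        (((x : ℂ)^2 - a^2) * ((x : ℂ)^2 - (starRingEnd ℂ a)^2) *
          ((x : ℂ)^2 - b^2) * ((x : ℂ)^2 - (starRingEnd ℂ b)^2)) ^ ((1:ℂ)/2))
      = (((∫ x in Set.Ioi (0:ℝ),
          x ^ s / (norm ((x:ℂ)^2-a^2) * norm ((x:ℂ)^2-b^2))) : ℝ) : ℂ) := by
    exact (setIntegral_congr_fun measurableSet_Ioi
      (fun x hx => lhs_integrand a b ha hb s hx)).trans integral_ofReal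
  have hI2 : (∫ x in Set.Ioi (0:ℝ),
        x ^ s / (norm ((x:ℂ)^2-a^2) * norm ((x:ℂ)^2-b^2)))
      = (1/2) * ∫ u in Set.Ioo (0:ℝ) 1,
          (u ^ ((1-s)/2) * (1-u) ^ ((s-1)/2) * (norm (1-(1+a^2)*(u:ℂ)))⁻¹ *
            (norm (1-(1+b^2)*(u:ℂ)))⁻¹) := by
    rw [← Fmap_image,
      integral_image_eq_integral_abs_deriv_smul measurableSet_Ioo
        (fun u hu => (Fmap_deriv hu.1 hu.2).hasDerivWithinAt) Fmap_inj, ← integral_const_mul]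
    refine setIntegral_congr_fun measurableSet_Ioo (fun u hu => ?_)
    simpa [smul_eq_mul] using cov_pointwise a b ha hb s hu.1 hu.2
  have hRI : (∫ u in (0:ℝ)..1,
        (u : ℂ) ^ ((((3 - s)/2 : ℝ):ℂ) - 1) *
          ((1 : ℂ) - (u : ℂ)) ^ ((2:ℂ) - (((3 - s)/2 : ℝ):ℂ) - 1) *
          (1 - (1 + a^2) * (u : ℂ)) ^ (-(1/2:ℂ)) *
          (1 - (1 + (starRingEnd ℂ a)^2) * (u : ℂ)) ^ (-(1/2:ℂ)) *
          (1 - (1 + b^2) * (u : ℂ)) ^ (-(1/2:ℂ)) *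
          (1 - (1 + (starRingEnd ℂ b)^2) * (u : ℂ)) ^ (-(1/2:ℂ)))
      = (((∫ u in Set.Ioo (0:ℝ) 1,
          (u ^ ((1-s)/2) * (1-u) ^ ((s-1)/2) * (norm (1-(1+a^2)*(u:ℂ)))⁻¹ *
            (norm (1-(1+b^2)*(u:ℂ)))⁻¹)) : ℝ) : ℂ) := by
    rw [intervalIntegral.integral_of_le zero_le_one,
      ← setIntegral_congr_set Ioo_ae_eq_Ioc,
      setIntegral_congr_fun measurableSet_Ioo
        (fun u hu => rhs_integrand a b ha hb s hu.1 hu.2)]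
    exact integral_ofReal
  have hG : Complex.Gamma 2 /
        (Complex.Gamma (((3 - s)/2 : ℝ):ℂ) * Complex.Gamma (2 - (((3 - s)/2 : ℝ):ℂ)))
      = ((((Real.Gamma ((3-s)/2) * Real.Gamma ((1+s)/2))⁻¹ : ℝ)) : ℂ) := by
    rw [show (2:ℂ) - (((3-s)/2:ℝ):ℂ) = (((1+s)/2:ℝ):ℂ) by push_cast; ring,
      Complex.Gamma_ofReal, Complex.Gamma_ofReal,
      show (2:ℂ) = ((2:ℝ):ℂ) by norm_num, Complex.Gamma_ofReal, Real.Gamma_two]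
    push_cast
    ring
  have hconst : (π * (1 - s) / (4 * Real.cos (π * s / 2))) *
      (Real.Gamma ((3-s)/2) * Real.Gamma ((1+s)/2))⁻¹ = 1/2 := by
    rw [gamma_calc s hs]
    have hc := cos_ne s hs1 hs3 hs
    have h1s : (1:ℝ) - s ≠ 0 := fun h => hs (by linarith)
    field_simp
    ring
  rw [hL, hI2, FD4C, hRI, hG]
  rw [← Complex.ofReal_mul, ← Complex.ofReal_mul, Complex.ofReal_inj]
  linear_combination (-(∫ u in Set.Ioo (0:ℝ) 1,
      (u ^ ((1-s)/2) * (1-u) ^ ((s-1)/2) * (norm (1-(1+a^2)*(u:ℂ)))⁻¹ *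
        (norm (1-(1+b^2)*(u:ℂ)))⁻¹))) * hconst
end
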